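/- arXiv:0806.3941 — 5 statements merged into one kernel-verified Lean document; each statement's English description precedes it below -/
import Mathlib

section
/- For positive integers n and r, the sum over all sequences a in {1,...,n}^r of q^{imaj(w_a)} equals the sum over l from 1 to n of S(r,l)·[n][n-1]···[n-l+1], where S(r,l) is the Stirling number of the second kind and [i] = 1 + q + ... + q^{i-1}. -/
open Finset

/-- Stirling numbers of the second kind: `stirling r l` counts set partitions of an
`r`-element set into `l` nonempty blocks. -/
def stirling : ℕ → ℕ → ℕ
  | 0, 0 => 1
  | 0, _ + 1 => 0
  | _ + 1, 0 => 0
  | r + 1, l + 1 => (l + 1) * stirling r (l + 1) + stirling r l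

/-- The `r`-th Bell number. -/
def bell (r : ℕ) : ℕ := ∑ l ∈ Finset.range (r + 1), stirling r l

/-- The q-integer `[i] = 1 + q + ... + q^(i-1)`. -/
def qint {R : Type*} [Semiring R] (q : R) (i : ℕ) : R := ∑ j ∈ Finset.range i, q ^ j

/-- The polynomial `d_{n,r}(q) = Σ_{l=1}^n S(r,l)·[n][n-1]···[n-l+1]`. -/
def dnr {R : Type*} [CommSemiring R] (n r : ℕ) (q : R) : R :=
  ∑ l ∈ Finset.Icc 1 n, (stirling r l : R) * ∏ j ∈ Finset.range l, qint q (n - j)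

/-- The one-line notation of the permutation `w_a`: start with the word `(1,2,...,n)` and,
for each letter of `a` in turn, move it to the rightmost position.  This produces the
rightmost occurrences of each value in the word `(1,...,n,a_1,...,a_r)`. -/
def waList (n : ℕ) (a : List ℕ) : List ℕ :=
  a.foldl (fun l x => l.erase x ++ [x]) (List.range' 1 n)

/-- The word associated with a sequence `a ∈ {1,...,n}^r` (values shifted to `1,...,n`). -/
def waWord {n r : ℕ} (a : Fin r → Fin n) : List ℕ := List.ofFn fun i => (a i : ℕ) + 1

/-- The inverse major index of a one-line word `l` with values `1,...,n`:
the sum of all `i` such that `i+1` occurs to the left of `i` (the backsteps). -/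
def imajList (n : ℕ) (l : List ℕ) : ℕ :=
  ∑ i ∈ Finset.Icc 1 (n - 1), if l.idxOf (i + 1) < l.idxOf i then i else 0

/-- The number of inversions of a permutation. -/
def invPerm {n : ℕ} (w : Equiv.Perm (Fin n)) : ℕ :=
  ((Finset.univ : Finset (Fin n × Fin n)).filter fun p => p.1 < p.2 ∧ w p.2 < w p.1).card

/-- The descent set of the one-line notation of `w` (zero-based positions). -/
def desSet {n : ℕ} (w : Equiv.Perm (Fin n)) : Finset ℕ :=
  (Finset.range (n - 1)).filter fun i =>
    ∃ h : i + 1 < n, w ⟨i + 1, h⟩ < w ⟨i, Nat.lt_of_succ_lt h⟩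

/-- The backstep set of `w` (zero-based values): `i` such that the value `i+1` appears to
the left of the value `i` in one-line notation, i.e. its position `w⁻¹ (i+1)` is smaller. -/
def bsSet {n : ℕ} (w : Equiv.Perm (Fin n)) : Finset ℕ :=
  (Finset.range (n - 1)).filter fun i =>
    ∃ h : i + 1 < n, w.symm ⟨i + 1, h⟩ < w.symm ⟨i, Nat.lt_of_succ_lt h⟩

/-- The set partition (as a finset of blocks) underlying a sequence `m`: `i ~ j` iff `m i = m j`. -/
def shapeFn {r : ℕ} {α : Type*} [DecidableEq α] (m : Fin r → α) : Finset (Finset (Fin r)) :=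
  (Finset.univ.image m).image fun v => Finset.univ.filter fun i => m i = v

/-- `K` is a set partition of `{1,...,r}`: blocks are nonempty and every element lies in a
unique block. -/
def isSetPartition {r : ℕ} (K : Finset (Finset (Fin r))) : Prop :=
  (∀ B ∈ K, B.Nonempty) ∧ ∀ i : Fin r, ∃! B, B ∈ K ∧ i ∈ B

instance {r : ℕ} : DecidablePred (isSetPartition (r := r)) := fun K => by
  unfold isSetPartition ExistsUnique; infer_instance

/-- Auxiliary computation of the ⋆-height: `m` records `1 + max` of the ⋆-heights so far. -/
def starAux : ℕ → List ℕ → List ℕ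
  | _, [] => []
  | m, k :: ks => min k m :: starAux (max m (min k m + 1)) ks

/-- The ⋆-height `k*` of a sequence `k ∈ Z_n^r`: `k_1* = 0` and
`k_j* = min(k_j, max(k_1*+1, ..., k_{j-1}*+1))`. -/
def starFn {n r : ℕ} (k : Fin r → Fin n) : Fin r → ℕ :=
  fun j => (starAux 0 (List.ofFn fun i => (k i : ℕ))).getD j 0

/-- `k_j - k_j*`, the number of free entries in column `j` of a `q`-set partition. -/
def qSetDiff {n r : ℕ} (k : Fin r → Fin n) (j : Fin r) : ℕ := (k j : ℕ) - starFn k j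

/-- The root subgroup element `x_{ij}(a)`: identity matrix plus `a` in position `(i,j)`. -/
def xelt {F : Type*} [Field F] {n : ℕ} (i j : Fin n) (a : F) : Matrix (Fin n) (Fin n) F :=
  1 + Matrix.single i j a

/-- The permutation matrix of `w`, with entry `1` in positions `(w l, l)`. -/
def permMat {F : Type*} [Field F] {n : ℕ} (w : Equiv.Perm (Fin n)) : Matrix (Fin n) (Fin n) F :=
  Matrix.of fun k l => if k = w l then 1 else 0



section Stmt0Development

section Qalg
variable {R : Type*} [CommRing R] (q : R)

def qfall (n l : ℕ) : R := ∏ j ∈ Finset.range l, qint q (n - j)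

lemma qint_add (a b : ℕ) : qint q (a + b) = qint q a + q ^ a * qint q b := by
  unfold qint
  rw [Finset.sum_range_add, Finset.mul_sum]
  congr 1
  exact Finset.sum_congr rfl fun i _ => (pow_add q a i)

lemma qint_succ (a : ℕ) : qint q (a + 1) = qint q a + q ^ a := by
  simp [qint, Finset.sum_range_succ]

@[simp] lemma qint_zero : qint q 0 = 0 := by simp [qint]

@[simp] lemma qint_one : qint q 1 = 1 := by simp [qint]

lemma qfall_succ (n l : ℕ) : qfall q n (l + 1) = qfall q n l * qint q (n - l) := by
  simp [qfall, Finset.prod_range_succ]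

lemma qfall_succ' (n l : ℕ) : qfall q (n + 1) (l + 1) = qint q (n + 1) * qfall q n l := by
  unfold qfall
  rw [Finset.prod_range_succ']
  simp only [Nat.succ_sub_succ_eq_sub, Nat.sub_zero]
  ring

@[simp] lemma qfall_zero (n : ℕ) : qfall q n 0 = 1 := by simp [qfall]

lemma qfall_eq_zero {n l : ℕ} (h : n < l) : qfall q n l = 0 := by
  apply Finset.prod_eq_zero (Finset.mem_range.2 h)
  simp

lemma idI0 (m l : ℕ) : qint q l * qfall q m (l - 1) + q ^ l * qfall q m l = qfall q (m + 1) l := by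
  cases l with
  | zero => simp
  | succ l' =>
    rcases le_or_gt (l' + 1) (m + 1) with h | h
    · have key : qint q (m + 1) = qint q (l' + 1) + q ^ (l' + 1) * qint q (m - l') := by
        conv_lhs => rw [show m + 1 = (l' + 1) + (m - l') by omega]
        rw [qint_add]
      rw [Nat.succ_sub_one, qfall_succ q m l', qfall_succ' q m l', key]
      ring
    · rw [qfall_eq_zero q (by omega : m < l' + 1), qfall_eq_zero q (by omega : m + 1 < l' + 1),
        Nat.succ_sub_one, qfall_eq_zero q (by omega : m < l')]
      ring

lemma idI (m l : ℕ) :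
    q ^ (m + 1) * qint q l * qfall q m (l - 1) + q ^ l * qfall q m l
      = q ^ l * qfall q (m + 1) l := by
  cases l with
  | zero => simp
  | succ l' =>
    rcases le_or_gt (l' + 1) (m + 1) with h | h
    · have key : qint q (m + 1) = qint q (m - l') + q ^ (m - l') * qint q (l' + 1) := by
        conv_lhs => rw [show m + 1 = (m - l') + (l' + 1) by omega]
        rw [qint_add]
      have p2 : q ^ (m + 1) = q ^ (l' + 1) * q ^ (m - l') := by
        rw [← pow_add]; congr 1; omega
      rw [Nat.succ_sub_one, qfall_succ q m l', qfall_succ' q m l', key, p2]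
      ring
    · rw [qfall_eq_zero q (by omega : m < l' + 1), qfall_eq_zero q (by omega : m + 1 < l' + 1),
        Nat.succ_sub_one, qfall_eq_zero q (by omega : m < l')]
      ring

lemma idII (m l t : ℕ) (ht : t < l) :
    q ^ (m + 1) * qint q (l - 1 - t) * qfall q m (l - 2)
      + q ^ (l - 1 - t) * qint q t * qfall q m (l - 2)
      + q ^ (l - 1) * qfall q m (l - 1)
      = q ^ (l - 1 - t) * qfall q (m + 1) (l - 1) := by
  rcases Nat.eq_or_lt_of_le (Nat.one_le_iff_ne_zero.2 (by omega) : 1 ≤ l) with h1 | h1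
  · have hl : l = 1 := h1.symm
    subst hl
    have htt : t = 0 := by omega
    subst htt
    simp
  · obtain ⟨l', rfl⟩ : ∃ l', l = l' + 2 := ⟨l - 2, by omega⟩
    have h2 : l' + 2 - 2 = l' := by omega
    have h3 : l' + 2 - 1 = l' + 1 := by omega
    rw [h2, h3]
    rcases le_or_gt (l' + 1) (m + 1) with h | h
    · have p1 : q ^ (l' + 1) = q ^ t * q ^ (l' + 1 - t) := by
        rw [← pow_add]; congr 1; omega
      have p2 : q ^ (m + 1) = q ^ t * q ^ (l' + 1 - t) * q ^ (m - l') := by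
        rw [← pow_add, ← pow_add]; congr 1; omega
      have key : qint q (m + 1)
          = qint q t + q ^ t * (qint q (m - l') + q ^ (m - l') * qint q (l' + 1 - t)) := by
        conv_lhs => rw [show m + 1 = t + ((m - l') + (l' + 1 - t)) by omega]
        rw [qint_add, qint_add]
      rw [qfall_succ' q m l', qfall_succ q m l', key, p1, p2]
      ring
    · rw [qfall_eq_zero q (by omega : m < l'), qfall_eq_zero q (by omega : m < l' + 1),
        qfall_eq_zero q (by omega : m + 1 < l' + 1)]
      ring
end Qalg

def wcond (i : ℕ) (V : List ℕ) : Prop :=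
  i ∈ V ∧ (i + 1 ∉ V ∨ V.idxOf (i + 1) < V.idxOf i)

instance : ∀ i V, Decidable (wcond i V) := fun i V => by unfold wcond; infer_instance

def statn (n : ℕ) (V : List ℕ) : ℕ :=
  ∑ i ∈ Finset.Icc 1 (n - 1), if wcond i V then i else 0

def wvalid (n : ℕ) (V : List ℕ) : Prop := V.Nodup ∧ ∀ x ∈ V, x ∈ List.range' 1 n

instance : ∀ n V, Decidable (wvalid n V) := fun n V => by unfold wvalid; infer_instance

def words (n l : ℕ) : Finset (List ℕ) :=
  (((List.range' 1 n).sublistsLen l).flatMap List.permutations).toFinset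

lemma mem_words {n l : ℕ} {V : List ℕ} : V ∈ words n l ↔ wvalid n V ∧ V.length = l := by
  unfold words
  rw [List.mem_toFinset, List.mem_flatMap]
  constructor
  · rintro ⟨s, hs, hV⟩
    rw [List.mem_sublistsLen] at hs
    rw [List.mem_permutations] at hV
    have hnds : s.Nodup := hs.1.nodup (List.nodup_range' (s := 1) (n := n))
    exact ⟨⟨hV.nodup_iff.2 hnds, fun x hx => hs.1.subset (hV.subset hx)⟩,
      hV.length_eq.trans hs.2⟩
  · rintro ⟨⟨hnd, hmem⟩, hlen⟩
    refine ⟨(List.range' 1 n).filter (fun x => decide (x ∈ V)), ?_, ?_⟩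
    · rw [List.mem_sublistsLen]
      have hperm : List.Perm V ((List.range' 1 n).filter (fun x => decide (x ∈ V))) := by
        apply (List.perm_ext_iff_of_nodup hnd ((List.nodup_range' (s := 1) (n := n)).filter _)).2
        intro x
        simp only [List.mem_filter, decide_eq_true_eq]
        exact ⟨fun hx => ⟨hmem x hx, hx⟩, fun hx => hx.2⟩
      exact ⟨List.filter_sublist, hperm.length_eq.symm.trans hlen⟩
    · rw [List.mem_permutations]
      apply (List.perm_ext_iff_of_nodup hnd ((List.nodup_range' (s := 1) (n := n)).filter _)).2
      intro x
      simp only [List.mem_filter, decide_eq_true_eq]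
      exact ⟨fun hx => ⟨hmem x hx, hx⟩, fun hx => hx.2⟩

lemma wvalid_length_le {n : ℕ} {V : List ℕ} (h : wvalid n V) : V.length ≤ n := by
  have := mem_words.2 ⟨h, rfl⟩
  unfold words at this
  rw [List.mem_toFinset, List.mem_flatMap] at this
  obtain ⟨s, hs, hV⟩ := this
  rw [List.mem_sublistsLen] at hs
  rw [List.mem_permutations] at hV
  calc V.length = s.length := hV.length_eq
    _ ≤ (List.range' 1 n).length := hs.1.length_le
    _ = n := by simp

lemma indexOf_lt_of_pairwise : ∀ {L : List ℕ}, L.Pairwise (· < ·) → ∀ {a b : ℕ},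
    a ∈ L → b ∈ L → a < b → L.idxOf a < L.idxOf b := by
  intro L
  induction L with
  | nil => intro _ a b ha; simp at ha
  | cons h t ih =>
    intro hL a b ha hb hab
    rcases List.pairwise_cons.1 hL with ⟨hh, ht⟩
    by_cases hah : h = a
    · subst hah
      have hbh : h ≠ b := by omega
      rw [List.idxOf_cons_self, List.idxOf_cons_ne _ hbh]
      exact Nat.succ_pos _
    · have ha' : a ∈ t := by
        rcases List.mem_cons.1 ha with h1 | h1
        · exact absurd h1.symm hah
        · exact h1
      have hba : h ≠ b := fun hb' => by subst hb'; exact absurd (hh a ha') (by omega)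
      have hb' : b ∈ t := by
        rcases List.mem_cons.1 hb with h1 | h1
        · exact absurd h1.symm hba
        · exact h1
      rw [List.idxOf_cons_ne _ hah, List.idxOf_cons_ne _ hba]
      exact Nat.succ_lt_succ (ih ht ha' hb' hab)

/-- Step B : the inverse major index of `C ++ V` equals `statn n V`. -/
lemma imajList_filter_append {n : ℕ} {V : List ℕ} (h : wvalid n V) :
    imajList n ((List.range' 1 n).filter (fun x => x ∉ V) ++ V) = statn n V := by
  unfold imajList statn
  apply Finset.sum_congr rfl
  intro i hi
  rw [Finset.mem_Icc] at hi
  have hin : i ∈ List.range' 1 n := by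
    rw [List.mem_range'_1]; omega
  have hin' : i + 1 ∈ List.range' 1 n := by
    rw [List.mem_range'_1]; omega
  set C := (List.range' 1 n).filter (fun x => x ∉ V) with hC
  have hCp : C.Pairwise (· < ·) := List.Pairwise.sublist (List.filter_sublist) (List.pairwise_lt_range' (s := 1) (n := n))
  have hmemC : ∀ x, x ∈ List.range' 1 n → x ∉ V → x ∈ C := by
    intro x hx hxv
    rw [hC, List.mem_filter]
    exact ⟨hx, by simpa using hxv⟩
  have hCV : ∀ x, x ∉ V → x ∉ C → x ∉ List.range' 1 n := by
    intro x hv hc hx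
    exact hc (hmemC x hx hv)
  congr 1
  rw [eq_iff_iff]
  by_cases h1 : i ∈ V <;> by_cases h2 : i + 1 ∈ V
  · have e1 : (C ++ V).idxOf i = C.length + V.idxOf i :=
      List.idxOf_append_of_notMem (by
        intro hc
        rw [hC, List.mem_filter] at hc
        exact (by simpa using hc.2 : i ∉ V) h1)
    have e2 : (C ++ V).idxOf (i + 1) = C.length + V.idxOf (i + 1) :=
      List.idxOf_append_of_notMem (by
        intro hc
        rw [hC, List.mem_filter] at hc
        exact (by simpa using hc.2 : i + 1 ∉ V) h2)
    rw [e1, e2]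
    unfold wcond
    constructor
    · intro hlt
      exact ⟨h1, Or.inr (by omega)⟩
    · rintro ⟨-, h3 | h3⟩
      · exact absurd h2 h3
      · omega
  · have hc2 : i + 1 ∈ C := hmemC _ hin' h2
    have e1 : (C ++ V).idxOf i = C.length + V.idxOf i :=
      List.idxOf_append_of_notMem (by
        intro hc
        rw [hC, List.mem_filter] at hc
        exact (by simpa using hc.2 : i ∉ V) h1)
    have e2 : (C ++ V).idxOf (i + 1) = C.idxOf (i + 1) :=
      List.idxOf_append_of_mem hc2
    have : C.idxOf (i + 1) < C.length := List.idxOf_lt_length_iff.2 hc2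
    rw [e1, e2]
    unfold wcond
    constructor
    · intro _; exact ⟨h1, Or.inl h2⟩
    · intro _; omega
  · have hc1 : i ∈ C := hmemC _ hin h1
    have e1 : (C ++ V).idxOf i = C.idxOf i := List.idxOf_append_of_mem hc1
    have e2 : (C ++ V).idxOf (i + 1) = C.length + V.idxOf (i + 1) :=
      List.idxOf_append_of_notMem (by
        intro hc
        rw [hC, List.mem_filter] at hc
        exact (by simpa using hc.2 : i + 1 ∉ V) h2)
    have : C.idxOf i < C.length := List.idxOf_lt_length_iff.2 hc1
    rw [e1, e2]
    unfold wcond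
    constructor
    · intro hlt; omega
    · rintro ⟨hiv, -⟩; exact absurd hiv h1
  · have hc1 : i ∈ C := hmemC _ hin h1
    have hc2 : i + 1 ∈ C := hmemC _ hin' h2
    have e1 : (C ++ V).idxOf i = C.idxOf i := List.idxOf_append_of_mem hc1
    have e2 : (C ++ V).idxOf (i + 1) = C.idxOf (i + 1) := List.idxOf_append_of_mem hc2
    have hmono : C.idxOf i < C.idxOf (i + 1) :=
      indexOf_lt_of_pairwise hCp hc1 hc2 (by omega)
    rw [e1, e2]
    unfold wcond
    constructor
    · intro hlt; omega
    · rintro ⟨hiv, -⟩; exact absurd hiv h1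

section InsertLemmas
variable {α : Type*} [DecidableEq α] {x : α}

lemma indexOf_insertIdx_self :
    ∀ (t : ℕ) (W : List α), x ∉ W → t ≤ W.length → (W.insertIdx t x).idxOf x = t
  | 0, W, _, _ => by simp
  | t+1, [], _, ht => by simp at ht
  | t+1, w :: ws, h, ht => by
    have hwx : w ≠ x := fun e => h (e ▸ List.mem_cons_self (a := w) (l := ws))
    rw [List.insertIdx_succ_cons, List.idxOf_cons_ne _ hwx,
      indexOf_insertIdx_self t ws (fun hx => h (List.mem_cons_of_mem _ hx)) (by simpa using ht)]

lemma indexOf_insertIdx_other :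
    ∀ (t : ℕ) (W : List α), x ∉ W → t ≤ W.length → ∀ y ∈ W,
      (W.insertIdx t x).idxOf y = W.idxOf y + (if t ≤ W.idxOf y then 1 else 0)
  | 0, W, hx, _, y, hy => by
    have hxy : x ≠ y := fun e => hx (e ▸ hy)
    simp [List.idxOf_cons_ne _ hxy, Nat.succ_eq_add_one]
  | t+1, [], _, ht, y, hy => by simp at hy
  | t+1, w :: ws, hx, ht, y, hy => by
    rw [List.insertIdx_succ_cons]
    by_cases hyw : w = y
    · subst hyw
      rw [List.idxOf_cons_self, List.idxOf_cons_self]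
      simp
    · have hy' : y ∈ ws := by
        rcases List.mem_cons.1 hy with h1 | h1
        · exact absurd h1.symm hyw
        · exact h1
      rw [List.idxOf_cons_ne _ hyw, List.idxOf_cons_ne _ hyw,
        indexOf_insertIdx_other t ws (fun hh => hx (List.mem_cons_of_mem _ hh))
          (by simpa using ht) y hy']
      simp only [Nat.succ_eq_add_one]
      split_ifs <;> omega

lemma nodup_insertIdx :
    ∀ (t : ℕ) (W : List α), x ∉ W → t ≤ W.length → W.Nodup → (W.insertIdx t x).Nodup
  | 0, W, hx, _, hnd => by simp [hx, hnd]
  | t+1, [], _, ht, _ => by simp at ht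
  | t+1, w :: ws, hx, ht, hnd => by
    rw [List.insertIdx_succ_cons]
    rcases List.nodup_cons.1 hnd with ⟨hw, hnd'⟩
    refine List.nodup_cons.2 ⟨?_, nodup_insertIdx t ws
      (fun hh => hx (List.mem_cons_of_mem _ hh)) (by simpa using ht) hnd'⟩
    intro hmem
    rcases (List.mem_insertIdx (by simpa using ht)).1 hmem with h1 | h1
    · exact hx (h1 ▸ List.mem_cons_self (a := w) (l := ws))
    · exact hw h1

lemma mem_insertIdx_iff {y : α} {t : ℕ} {W : List α} (ht : t ≤ W.length) :
    y ∈ W.insertIdx t x ↔ y = x ∨ y ∈ W := List.mem_insertIdx ht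

lemma erase_insertIdx :
    ∀ (t : ℕ) (W : List α), x ∉ W → (W.insertIdx t x).erase x = W
  | 0, W, _ => by simp
  | t+1, [], _ => by simp
  | t+1, w :: ws, hx => by
    have hwx : w ≠ x := fun e => hx (e ▸ List.mem_cons_self (a := w) (l := ws))
    rw [List.insertIdx_succ_cons, List.erase_cons_tail (by simpa using hwx),
      erase_insertIdx t ws (fun hh => hx (List.mem_cons_of_mem _ hh))]

lemma insertIdx_erase :
    ∀ (W : List α), x ∈ W → W.Nodup → (W.erase x).insertIdx (W.idxOf x) x = W := by
  intro W
  induction W with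
  | nil => intro h; simp at h
  | cons w ws ih =>
    intro hx hnd
    by_cases hwx : w = x
    · subst hwx
      rw [List.idxOf_cons_self, List.erase_cons_head]
      simp
    · have hx' : x ∈ ws := by
        rcases List.mem_cons.1 hx with h1 | h1
        · exact absurd h1.symm hwx
        · exact h1
      rw [List.idxOf_cons_ne _ hwx, List.erase_cons_tail (by simpa using hwx),
        Nat.succ_eq_add_one, List.insertIdx_succ_cons,
        ih hx' (List.nodup_cons.1 hnd).2]
end InsertLemmas

/-- T1 : removing the (absent) top value. -/
lemma statn_succ_of_not_mem {m : ℕ} {V : List ℕ} (h : m + 2 ∉ V) :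
    statn (m + 2) V = statn (m + 1) V + (if m + 1 ∈ V then m + 1 else 0) := by
  unfold statn
  have e1 : m + 2 - 1 = m + 1 := rfl
  have e2 : m + 1 - 1 = m := rfl
  rw [e1, e2, Finset.sum_Icc_succ_top (by omega : 1 ≤ m + 1)]
  congr 1
  have : wcond (m + 1) V ↔ m + 1 ∈ V := by
    unfold wcond
    constructor
    · exact fun hh => hh.1
    · exact fun hh => ⟨hh, Or.inl h⟩
  simp only [this]

/-- T2 : inserting the top value at position `t`. -/
lemma statn_succ_insertIdx {m t : ℕ} {W : List ℕ} (hW : wvalid (m + 1) W)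
    (ht : t ≤ W.length) :
    statn (m + 2) (W.insertIdx t (m + 2))
      = statn (m + 1) W
        + (if m + 1 ∈ W ∧ t ≤ W.idxOf (m + 1) then m + 1 else 0) := by
  obtain ⟨hnd, hmem⟩ := hW
  have hnotin : (m + 2) ∉ W := by
    intro hh
    have := hmem _ hh
    rw [List.mem_range'_1] at this
    omega
  set V := W.insertIdx t (m + 2) with hV
  unfold statn
  have e1 : m + 2 - 1 = m + 1 := rfl
  have e2 : m + 1 - 1 = m := rfl
  rw [e1, e2, Finset.sum_Icc_succ_top (by omega : 1 ≤ m + 1)]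
  congr 1
  · -- lower terms agree
    apply Finset.sum_congr rfl
    intro i hi
    rw [Finset.mem_Icc] at hi
    congr 1
    rw [eq_iff_iff]
    have himem : ∀ y : ℕ, y ≠ m + 2 → (y ∈ V ↔ y ∈ W) := by
      intro y hy
      rw [hV, mem_insertIdx_iff ht]
      exact ⟨fun hh => hh.resolve_left hy, Or.inr⟩
    have h1 : (i ∈ V) ↔ i ∈ W := himem i (by omega)
    have h2 : (i + 1 ∈ V) ↔ i + 1 ∈ W := himem (i + 1) (by omega)
    unfold wcond
    by_cases hiW : i ∈ W
    · by_cases hiW' : i + 1 ∈ W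
      · have e3 : V.idxOf i = W.idxOf i + (if t ≤ W.idxOf i then 1 else 0) :=
          indexOf_insertIdx_other t W hnotin ht i hiW
        have e4 : V.idxOf (i+1) = W.idxOf (i+1) + (if t ≤ W.idxOf (i+1) then 1 else 0) :=
          indexOf_insertIdx_other t W hnotin ht (i+1) hiW'
        rw [e3, e4]
        constructor
        · rintro ⟨-, hor⟩
          refine ⟨hiW, ?_⟩
          rcases hor with hc | hc
          · exact absurd (h2.2 hiW') hc
          · right; split_ifs at hc <;> omega
        · rintro ⟨-, hor⟩
          refine ⟨h1.2 hiW, ?_⟩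
          rcases hor with hc | hc
          · exact absurd hiW' hc
          · right; split_ifs <;> omega
      · have hc2 : i + 1 ∉ V := fun hh => hiW' (h2.1 hh)
        constructor
        · rintro ⟨hiv, -⟩; exact ⟨h1.1 hiv, Or.inl hiW'⟩
        · rintro ⟨hiw, -⟩; exact ⟨h1.2 hiw, Or.inl hc2⟩
    · constructor
      · rintro ⟨hiv, -⟩; exact absurd (h1.1 hiv) hiW
      · rintro ⟨hiw, -⟩; exact absurd hiw hiW
  · -- top term
    have htop : wcond (m + 1) V ↔ (m + 1 ∈ W ∧ t ≤ W.idxOf (m + 1)) := by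
      unfold wcond
      have hmm : m + 1 + 1 ∈ V := by
        rw [hV, mem_insertIdx_iff ht]; left; rfl
      have hidx : V.idxOf (m + 1 + 1) = t := by
        rw [hV]; exact indexOf_insertIdx_self t W hnotin ht
      constructor
      · rintro ⟨h1, hor⟩
        have h1' : m + 1 ∈ W := by
          rw [hV, mem_insertIdx_iff ht] at h1
          rcases h1 with hh | hh
          · omega
          · exact hh
        refine ⟨h1', ?_⟩
        rcases hor with hc | hc
        · exact absurd hmm hc
        · rw [hidx, hV, indexOf_insertIdx_other t W hnotin ht _ h1'] at hc
          split_ifs at hc <;> omega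
      · rintro ⟨h1, h2⟩
        refine ⟨by rw [hV, mem_insertIdx_iff ht]; right; exact h1, Or.inr ?_⟩
        rw [hidx, hV, indexOf_insertIdx_other t W hnotin ht _ h1]
        split_ifs <;> omega
    simp only [htop]

def ordL (w : List ℕ) : List ℕ := w.foldl (fun l x => l.erase x ++ [x]) []


/-- Structure of the fold: moving already-seen letters to the back. -/
lemma foldl_move_eq (n : ℕ) : ∀ (w : List ℕ), (∀ x ∈ w, x ∈ List.range' 1 n) →
    w.foldl (fun l x => l.erase x ++ [x]) (List.range' 1 n)
      = (List.range' 1 n).filter (fun x => x ∉ ordL w) ++ ordL w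
    ∧ (ordL w).Nodup ∧ (∀ x ∈ ordL w, x ∈ w) := by
  intro w
  induction w using List.reverseRecOn with
  | nil =>
    intro _
    refine ⟨?_, by simp [ordL], by simp [ordL]⟩
    simp only [List.foldl_nil, ordL]
    rw [List.filter_eq_self.2 (by simp)]
    simp
  | append_singleton w y ih =>
    intro hw
    have hw' : ∀ x ∈ w, x ∈ List.range' 1 n := fun x hx => hw x (by simp [hx])
    have hy : y ∈ List.range' 1 n := hw y (by simp)
    obtain ⟨hfold, hnd, hsub⟩ := ih hw'
    have hordapp : ordL (w ++ [y]) = (ordL w).erase y ++ [y] := by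
      simp [ordL, List.foldl_append]
    set V := ordL w with hV
    have hnd' : (ordL (w ++ [y])).Nodup := by
      rw [hordapp]
      have : y ∉ V.erase y := hnd.not_mem_erase
      simp only [List.nodup_append]
      exact ⟨hnd.erase y, List.nodup_singleton y, fun a ha b hb hab => this (by rw [List.mem_singleton] at hb; subst hb; subst hab; exact ha)⟩
    have hsub' : ∀ x ∈ ordL (w ++ [y]), x ∈ w ++ [y] := by
      intro x hx
      rw [hordapp] at hx
      rcases List.mem_append.1 hx with h1 | h1
      · exact List.mem_append.2 (Or.inl (hsub x (List.mem_of_mem_erase h1)))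
      · simp only [List.mem_singleton] at h1; subst h1; simp
    refine ⟨?_, hnd', hsub'⟩
    rw [List.foldl_append, List.foldl_cons, List.foldl_nil, hfold, hordapp]
    by_cases hyV : y ∈ V
    · have hynotC : y ∉ (List.range' 1 n).filter (fun x => x ∉ V) := by
        simp only [List.mem_filter]
        intro hc
        exact absurd hyV (by simpa using hc.2)
      rw [List.erase_append_right _ hynotC, List.append_assoc]
      congr 1
      apply List.filter_congr
      intro x hx
      simp only [decide_eq_decide]
      constructor
      · intro hxV hx2
        rcases List.mem_append.1 hx2 with h1 | h1
        · exact hxV (List.mem_of_mem_erase h1)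
        · simp only [List.mem_singleton] at h1; subst h1; exact hxV hyV
      · intro hxV' hx2
        apply hxV'
        by_cases hxy : x = y
        · subst hxy; simp
        · exact List.mem_append.2 (Or.inl ((hnd.mem_erase_iff).2 ⟨hxy, hx2⟩))
    · have hyC : y ∈ (List.range' 1 n).filter (fun x => x ∉ V) := by
        simp only [List.mem_filter]
        exact ⟨hy, by simpa using hyV⟩
      rw [List.erase_of_not_mem hyV, List.erase_append_left _ hyC, List.append_assoc]
      congr 1
      rw [(List.nodup_range' (s := 1) (n := n)).filter _ |>.erase_eq_filter y, List.filter_filter]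
      apply List.filter_congr
      intro x hx
      rw [Bool.eq_iff_iff]
      simp only [Bool.and_eq_true, decide_eq_true_eq, bne_iff_ne, List.mem_append,
        List.mem_singleton]
      tauto

section Master
variable {R : Type*} [CommRing R] (q : R)

lemma revgeom : ∀ (k a : ℕ), (∑ t' ∈ Finset.Ico a (a + k), q ^ (a + k - 1 - t')) = qint q k := by
  intro k
  induction k with
  | zero => intro a; simp
  | succ k ih =>
    intro a
    rw [Finset.sum_eq_sum_Ico_succ_bot (by omega : a < a + (k + 1))]
    have e0 : a + (k + 1) - 1 - a = k := by omega
    have e1 : a + (k + 1) = (a + 1) + k := by omega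
    have : (∑ t' ∈ Finset.Ico (a + 1) ((a + 1) + k), q ^ ((a + 1) + k - 1 - t')) = qint q k :=
      ih (a + 1)
    rw [e0, e1, this, qint_succ]
    ring

/-- Splitting a sum over `words n l` (with `n = m+1 ≥ 1`) according to whether and where the
top value `n` occurs. -/
lemma words_sum_split (n l : ℕ) (f : List ℕ → R) :
    (∑ V ∈ words n l, f V)
      = (∑ V ∈ (words n l).filter (fun V => n ∉ V), f V)
        + ∑ t ∈ Finset.range l,
            ∑ V ∈ (words n l).filter (fun V => n ∈ V ∧ V.idxOf n = t), f V := by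
  rw [← Finset.sum_filter_add_sum_filter_not (words n l) (fun V => n ∈ V) f]
  rw [add_comm]
  congr 1
  rw [← Finset.sum_fiberwise_of_maps_to (g := fun V => V.idxOf n)
    (t := Finset.range l) ?_ f]
  · apply Finset.sum_congr rfl
    intro t _
    apply Finset.sum_congr _ (fun _ _ => rfl)
    rw [Finset.filter_filter]
  · intro V hV
    rw [Finset.mem_filter] at hV
    obtain ⟨hVw, hVn⟩ := hV
    rw [mem_words] at hVw
    rw [Finset.mem_range, ← hVw.2]
    exact List.idxOf_lt_length_iff.2 hVn

/-- The filtered set with `n ∉ V` is just `words (n-1) l`. -/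
lemma words_filter_not (m l : ℕ) :
    (words (m + 2) l).filter (fun V => (m + 2) ∉ V) = words (m + 1) l := by
  apply Finset.ext
  intro V
  rw [Finset.mem_filter, mem_words, mem_words]
  unfold wvalid
  constructor
  · rintro ⟨⟨⟨hnd, hmem⟩, hlen⟩, hnot⟩
    refine ⟨⟨hnd, fun x hx => ?_⟩, hlen⟩
    have := hmem x hx
    rw [List.mem_range'_1] at this ⊢
    have hxne : x ≠ m + 2 := fun e => hnot (e ▸ hx)
    omega
  · rintro ⟨⟨hnd, hmem⟩, hlen⟩
    have hnot : (m + 2) ∉ V := by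
      intro hh
      have := hmem _ hh
      rw [List.mem_range'_1] at this
      omega
    refine ⟨⟨⟨hnd, fun x hx => ?_⟩, hlen⟩, hnot⟩
    have := hmem x hx
    rw [List.mem_range'_1] at this ⊢
    omega

/-- Reindexing the sum over words with `n = m+2` at position `t` by insertion. -/
lemma words_sum_at (m l t : ℕ) (ht : t < l) (f : List ℕ → R) :
    (∑ V ∈ (words (m + 2) l).filter
        (fun V => (m + 2) ∈ V ∧ V.idxOf (m + 2) = t), f V)
      = ∑ W ∈ words (m + 1) (l - 1), f (W.insertIdx t (m + 2)) := by
  symm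
  apply Finset.sum_nbij' (i := fun W => W.insertIdx t (m + 2)) (j := fun V => V.erase (m + 2))
  · intro W hW
    rw [mem_words] at hW
    obtain ⟨⟨hnd, hmem⟩, hlen⟩ := hW
    have htW : t ≤ W.length := by omega
    have hnotin : (m + 2) ∉ W := by
      intro hh
      have := hmem _ hh
      rw [List.mem_range'_1] at this
      omega
    rw [Finset.mem_filter, mem_words]
    refine ⟨⟨⟨nodup_insertIdx t W hnotin htW hnd, ?_⟩, ?_⟩, ?_, ?_⟩
    · intro x hx
      rcases (mem_insertIdx_iff htW).1 hx with h1 | h1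
      · rw [List.mem_range'_1]; omega
      · have := hmem _ h1
        rw [List.mem_range'_1] at this ⊢
        omega
    · rw [List.length_insertIdx_of_le_length htW]; omega
    · rw [mem_insertIdx_iff htW]; left; rfl
    · exact indexOf_insertIdx_self t W hnotin htW
  · intro V hV
    rw [Finset.mem_filter, mem_words] at hV
    obtain ⟨⟨⟨hnd, hmem⟩, hlen⟩, hin, -⟩ := hV
    rw [mem_words]
    refine ⟨⟨hnd.erase _, ?_⟩, ?_⟩
    · intro x hx
      have hx' : x ≠ m + 2 ∧ x ∈ V := (hnd.mem_erase_iff).1 hx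
      have := hmem _ hx'.2
      rw [List.mem_range'_1] at this ⊢
      have := hx'.1
      omega
    · rw [List.length_erase_of_mem hin, hlen]
  · intro W hW
    rw [mem_words] at hW
    obtain ⟨⟨hnd, hmem⟩, hlen⟩ := hW
    have hnotin : (m + 2) ∉ W := by
      intro hh
      have := hmem _ hh
      rw [List.mem_range'_1] at this
      omega
    exact erase_insertIdx t W hnotin
  · intro V hV
    rw [Finset.mem_filter, mem_words] at hV
    obtain ⟨⟨⟨hnd, hmem⟩, hlen⟩, hin, hidx⟩ := hV
    rw [← hidx]
    exact insertIdx_erase V hin hnd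
  · intro W _
    rfl

/-- The master induction: refined distribution of `statn` over `words (m+1) l`. -/
lemma master (m : ℕ) :
    (∀ l : ℕ, (∑ V ∈ (words (m + 1) l).filter (fun V => (m + 1) ∉ V),
        q ^ statn (m + 1) V) = q ^ l * qfall q m l)
    ∧ (∀ l t : ℕ, t < l →
        (∑ V ∈ (words (m + 1) l).filter
            (fun V => (m + 1) ∈ V ∧ V.idxOf (m + 1) = t), q ^ statn (m + 1) V)
          = q ^ (l - 1 - t) * qfall q m (l - 1)) := by
  induction m with
  | zero =>
    constructor
    · intro l
      match l with
      | 0 =>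
        have : words 1 0 = {([] : List ℕ)} := by
          apply Finset.ext
          intro V
          rw [mem_words, Finset.mem_singleton]
          constructor
          · rintro ⟨-, hlen⟩; exact List.eq_nil_of_length_eq_zero hlen
          · rintro rfl; exact ⟨⟨List.nodup_nil, by simp⟩, rfl⟩
        rw [this, Finset.filter_singleton, if_pos (by simp)]
        simp [statn]
      | (l' + 1) =>
        rw [Finset.sum_eq_zero, qfall_eq_zero q (by omega : 0 < l' + 1), mul_zero]
        intro V hV
        rw [Finset.mem_filter, mem_words] at hV
        obtain ⟨⟨⟨hnd, hmem⟩, hlen⟩, hnot⟩ := hV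
        exfalso
        apply hnot
        have hne : V ≠ [] := by
          intro e; rw [e] at hlen; simp at hlen
        obtain ⟨y, hy⟩ := List.exists_mem_of_ne_nil V hne
        have := hmem y hy
        rw [List.mem_range'_1] at this
        have : y = 1 := by omega
        subst this
        exact hy
    · intro l t hlt
      match l, t with
      | 1, 0 =>
        have : (words 1 1).filter (fun V => (1:ℕ) ∈ V ∧ V.idxOf 1 = 0) = {[1]} := by
          apply Finset.ext
          intro V
          rw [Finset.mem_filter, mem_words, Finset.mem_singleton]
          constructor
          · rintro ⟨⟨⟨hnd, hmem⟩, hlen⟩, -, -⟩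
            obtain ⟨a, rfl⟩ := List.length_eq_one_iff.1 hlen
            have := hmem a (by simp)
            rw [List.mem_range'_1] at this
            have : a = 1 := by omega
            subst this; rfl
          · rintro rfl
            refine ⟨⟨⟨by simp, by intro x hx; simp at hx; subst hx; simp⟩, rfl⟩, by simp, by simp⟩
        rw [this]
        simp [statn]
      | (l' + 2), t =>
        rw [Finset.sum_eq_zero, qfall_eq_zero q (by omega : 0 < l' + 2 - 1), mul_zero]
        intro V hV
        rw [Finset.mem_filter, mem_words] at hV
        exfalso
        have := wvalid_length_le hV.1.1
        omega
  | succ m ih =>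
    obtain ⟨ih1, ih2⟩ := ih
    -- auxiliary computation
    have aux : ∀ l t : ℕ, t ≤ l →
        (∑ W ∈ words (m + 1) l, q ^ statn (m + 1) W
            * (if (m + 1) ∈ W ∧ t ≤ W.idxOf (m + 1) then q ^ (m + 1) else 1))
          = q ^ (m + 1) * qint q (l - t) * qfall q m (l - 1)
            + q ^ (l - t) * qint q t * qfall q m (l - 1)
            + q ^ l * qfall q m l := by
      intro l t htl
      rw [words_sum_split (m + 1) l]
      have hnot : (∑ V ∈ (words (m + 1) l).filter (fun V => (m + 1) ∉ V),
          q ^ statn (m + 1) V * (if (m + 1) ∈ V ∧ t ≤ V.idxOf (m + 1) then q ^ (m + 1) else 1))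
          = q ^ l * qfall q m l := by
        rw [← ih1 l]
        apply Finset.sum_congr rfl
        intro V hV
        rw [Finset.mem_filter] at hV
        rw [if_neg (fun hc => hV.2 hc.1), mul_one]
      rw [hnot]
      have hat : ∀ t' ∈ Finset.range l,
          (∑ V ∈ (words (m + 1) l).filter (fun V => (m + 1) ∈ V ∧ V.idxOf (m + 1) = t'),
            q ^ statn (m + 1) V * (if (m + 1) ∈ V ∧ t ≤ V.idxOf (m + 1) then q ^ (m + 1) else 1))
          = (if t ≤ t' then q ^ (m + 1) else 1) * (q ^ (l - 1 - t') * qfall q m (l - 1)) := by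
        intro t' ht'
        rw [Finset.mem_range] at ht'
        rw [← ih2 l t' ht', Finset.mul_sum]
        apply Finset.sum_congr rfl
        intro V hV
        rw [Finset.mem_filter] at hV
        obtain ⟨-, hin, hidx⟩ := hV
        rw [mul_comm]
        congr 1
        rw [hidx]
        by_cases hc : t ≤ t'
        · rw [if_pos hc, if_pos ⟨hin, hc⟩]
        · rw [if_neg hc, if_neg (fun hh => hc hh.2)]
      rw [Finset.sum_congr rfl hat]
      -- now compute the t'-sum
      rw [Finset.range_eq_Ico, ← Finset.sum_Ico_consecutive _ (by omega : 0 ≤ t) (by omega : t ≤ l)]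
      have hgeom1 : (∑ t' ∈ Finset.Ico 0 t, q ^ (t - 1 - t')) = qint q t := by
        have := revgeom q t 0
        simpa using this
      have hgeom2 : (∑ t' ∈ Finset.Ico t l, q ^ (l - 1 - t')) = qint q (l - t) := by
        have := revgeom q (l - t) t
        rw [show t + (l - t) = l by omega] at this
        exact this
      have hsum1 : (∑ t' ∈ Finset.Ico 0 t,
          (if t ≤ t' then q ^ (m + 1) else 1) * (q ^ (l - 1 - t') * qfall q m (l - 1)))
          = q ^ (l - t) * qint q t * qfall q m (l - 1) := by
        have hpt : ∀ t' ∈ Finset.Ico 0 t,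
            (if t ≤ t' then q ^ (m + 1) else 1) * (q ^ (l - 1 - t') * qfall q m (l - 1))
              = (q ^ (l - t) * qfall q m (l - 1)) * q ^ (t - 1 - t') := by
          intro t' ht'
          rw [Finset.mem_Ico] at ht'
          rw [if_neg (by omega), one_mul,
            show (l - 1 - t') = (l - t) + (t - 1 - t') by omega, pow_add]
          ring
        rw [Finset.sum_congr rfl hpt, ← Finset.mul_sum, hgeom1]
        ring
      have hsum2 : (∑ t' ∈ Finset.Ico t l,
          (if t ≤ t' then q ^ (m + 1) else 1) * (q ^ (l - 1 - t') * qfall q m (l - 1)))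
          = q ^ (m + 1) * qint q (l - t) * qfall q m (l - 1) := by
        have hpt : ∀ t' ∈ Finset.Ico t l,
            (if t ≤ t' then q ^ (m + 1) else 1) * (q ^ (l - 1 - t') * qfall q m (l - 1))
              = (q ^ (m + 1) * qfall q m (l - 1)) * q ^ (l - 1 - t') := by
          intro t' ht'
          rw [Finset.mem_Ico] at ht'
          rw [if_pos (by omega)]
          ring
        rw [Finset.sum_congr rfl hpt, ← Finset.mul_sum, hgeom2]
        ring
      rw [hsum1, hsum2]
      ring
    constructor
    · -- part (i) at m+1
      intro l
      rw [words_filter_not m l]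
      have : (∑ V ∈ words (m + 1) l, q ^ statn (m + 2) V)
          = ∑ W ∈ words (m + 1) l, q ^ statn (m + 1) W
              * (if (m + 1) ∈ W ∧ 0 ≤ W.idxOf (m + 1) then q ^ (m + 1) else 1) := by
        apply Finset.sum_congr rfl
        intro W hW
        rw [mem_words] at hW
        have hnotin : (m + 2) ∉ W := by
          intro hh
          have := hW.1.2 _ hh
          rw [List.mem_range'_1] at this
          omega
        rw [statn_succ_of_not_mem hnotin, pow_add]
        congr 1
        by_cases hc : (m + 1) ∈ W
        · rw [if_pos hc, if_pos ⟨hc, Nat.zero_le _⟩]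
        · rw [if_neg hc, if_neg (fun hh => hc hh.1), pow_zero]
      rw [this, aux l 0 (Nat.zero_le _)]
      simp only [Nat.sub_zero]
      rw [qint_zero, mul_zero, zero_mul, add_zero]
      exact idI q m l
    · -- part (ii) at m+1
      intro l t hlt
      rw [words_sum_at m l t hlt]
      have : (∑ W ∈ words (m + 1) (l - 1), q ^ statn (m + 2) (W.insertIdx t (m + 2)))
          = ∑ W ∈ words (m + 1) (l - 1), q ^ statn (m + 1) W
              * (if (m + 1) ∈ W ∧ t ≤ W.idxOf (m + 1) then q ^ (m + 1) else 1) := by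
        apply Finset.sum_congr rfl
        intro W hW
        rw [mem_words] at hW
        have htW : t ≤ W.length := by omega
        rw [statn_succ_insertIdx hW.1 htW, pow_add]
        congr 1
        by_cases hc : (m + 1) ∈ W ∧ t ≤ W.idxOf (m + 1)
        · rw [if_pos hc, if_pos hc]
        · rw [if_neg hc, if_neg hc, pow_zero]
      rw [this, aux (l - 1) t (by omega)]
      have e1 : l - 1 - 1 = l - 2 := by omega
      rw [e1]
      exact idII q m l t hlt

/-- Step D : the generating function of `statn` over injective words. -/
lemma wsum_eq_qfall (n l : ℕ) : (∑ V ∈ words n l, q ^ statn n V) = qfall q n l := by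
  cases n with
  | zero =>
    match l with
    | 0 =>
      have : words 0 0 = {([] : List ℕ)} := by
        apply Finset.ext
        intro V
        rw [mem_words, Finset.mem_singleton]
        constructor
        · rintro ⟨-, hlen⟩; exact List.eq_nil_of_length_eq_zero hlen
        · rintro rfl; exact ⟨⟨List.nodup_nil, by simp⟩, rfl⟩
      rw [this]
      simp [statn]
    | (l' + 1) =>
      rw [Finset.sum_eq_zero, qfall_eq_zero q (by omega : 0 < l' + 1)]
      intro V hV
      rw [mem_words] at hV
      exfalso
      have := wvalid_length_le hV.1
      omega
  | succ m =>
    obtain ⟨h1, h2⟩ := master q m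
    rw [words_sum_split (m + 1) l, h1 l]
    have : ∀ t ∈ Finset.range l,
        (∑ V ∈ (words (m + 1) l).filter
            (fun V => (m + 1) ∈ V ∧ V.idxOf (m + 1) = t), q ^ statn (m + 1) V)
          = q ^ (l - 1 - t) * qfall q m (l - 1) := by
      intro t ht
      rw [Finset.mem_range] at ht
      exact h2 l t ht
    rw [Finset.sum_congr rfl this, ← Finset.sum_mul]
    have hg : (∑ t ∈ Finset.range l, q ^ (l - 1 - t)) = qint q l := by
      have h0 := revgeom q l 0
      rw [Nat.zero_add] at h0
      rw [Finset.range_eq_Ico]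
      exact h0
    rw [hg, ← idI0 q m l]
    ring
end Master

section Counting

lemma ordL_append (w : List ℕ) (y : ℕ) : ordL (w ++ [y]) = (ordL w).erase y ++ [y] := by
  simp [ordL, List.foldl_append]

lemma ordL_valid {n : ℕ} {w : List ℕ} (hw : ∀ x ∈ w, x ∈ List.range' 1 n) :
    wvalid n (ordL w) := by
  obtain ⟨-, hnd, hsub⟩ := foldl_move_eq n w hw
  exact ⟨hnd, fun x hx => hw x (hsub x hx)⟩

lemma waWord_mem {n r : ℕ} (a : Fin r → Fin n) : ∀ x ∈ waWord a, x ∈ List.range' 1 n := by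
  intro x hx
  unfold waWord at hx
  rw [List.mem_ofFn] at hx
  obtain ⟨i, hi⟩ := hx
  have hi' : (a i : ℕ) + 1 = x := hi
  rw [List.mem_range'_1]
  have := (a i).isLt
  omega

lemma waWord_snoc {n r : ℕ} (a' : Fin r → Fin n) (x : Fin n) :
    waWord (Fin.snoc a' x) = waWord a' ++ [(x : ℕ) + 1] := by
  unfold waWord
  rw [List.ofFn_succ']
  simp only [Fin.snoc_castSucc, Fin.snoc_last]
  exact List.concat_eq_append

lemma card_fiber (n : ℕ) : ∀ (r : ℕ) (V : List ℕ),
    (Finset.univ.filter (fun a : Fin r → Fin n => ordL (waWord a) = V)).card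
      = if wvalid n V then stirling r V.length else 0 := by
  intro r
  induction r with
  | zero =>
    intro V
    have hall : ∀ a : Fin 0 → Fin n, ordL (waWord a) = [] := by
      intro a
      have : waWord a = [] := by simp [waWord]
      rw [this]; rfl
    by_cases hV : V = []
    · subst hV
      rw [if_pos ⟨List.nodup_nil, by simp⟩]
      rw [Finset.filter_true_of_mem (fun a _ => hall a)]
      rw [show stirling 0 ([] : List ℕ).length = 1 from rfl]
      simp
    · rw [Finset.filter_false_of_mem (fun a _ => by rw [hall a]; exact fun h => hV h.symm)]
      match V with
      | [] => exact absurd rfl hV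
      | (z :: zs) =>
        simp only [Finset.card_empty, List.length_cons]
        split <;> rfl
  | succ r ih =>
    intro V
    have hsplit : (Finset.univ.filter
        (fun a : Fin (r+1) → Fin n => ordL (waWord a) = V)).card
        = ∑ x : Fin n, (Finset.univ.filter
            (fun a' : Fin r → Fin n => (ordL (waWord a')).erase ((x : ℕ) + 1)
              ++ [(x : ℕ) + 1] = V)).card := by
      rw [Finset.card_eq_sum_card_fiberwise
        (f := fun a : Fin (r+1) → Fin n => a (Fin.last r)) (t := Finset.univ)
        (fun _ _ => Finset.mem_univ _)]
      apply Finset.sum_congr rfl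
      intro x _
      apply Finset.card_nbij' (i := fun a => Fin.init a) (j := fun a' => Fin.snoc a' x)
      · intro a ha
        rw [Finset.mem_coe, Finset.mem_filter, Finset.mem_filter] at ha
        obtain ⟨⟨-, h1⟩, h2⟩ := ha
        rw [Finset.mem_coe, Finset.mem_filter]
        refine ⟨Finset.mem_univ _, ?_⟩
        have : waWord a = waWord (Fin.init a) ++ [(x : ℕ) + 1] := by
          conv_lhs => rw [← Fin.snoc_init_self a]
          rw [waWord_snoc, h2]
        rw [this, ordL_append] at h1
        exact h1
      · intro a' ha'
        rw [Finset.mem_coe, Finset.mem_filter] at ha'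
        rw [Finset.mem_coe, Finset.mem_filter, Finset.mem_filter]
        refine ⟨⟨Finset.mem_univ _, ?_⟩, by simp⟩
        rw [waWord_snoc, ordL_append]
        exact ha'.2
      · intro a ha
        rw [Finset.mem_coe, Finset.mem_filter, Finset.mem_filter] at ha
        rw [← ha.2]
        exact Fin.snoc_init_self a
      · intro a' _
        simp
    rw [hsplit]
    rcases List.eq_nil_or_concat V with hV | ⟨W, y, hV⟩
    · subst hV
      rw [Finset.sum_eq_zero, if_pos ⟨List.nodup_nil, by simp⟩]
      · rfl
      · intro x _
        rw [Finset.filter_false_of_mem, Finset.card_empty]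
        intro a' _ hc
        simp at hc
    · subst hV
      rw [List.concat_eq_append]
      have hfib : ∀ x : Fin n,
          (Finset.univ.filter (fun a' : Fin r → Fin n =>
            (ordL (waWord a')).erase ((x : ℕ) + 1) ++ [(x : ℕ) + 1] = W ++ [y])).card
          = if (x : ℕ) + 1 = y then
              (Finset.univ.filter (fun a' : Fin r → Fin n =>
                (ordL (waWord a')).erase y = W)).card
            else 0 := by
        intro x
        by_cases hxy : (x : ℕ) + 1 = y
        · rw [if_pos hxy]
          congr 1
          apply Finset.filter_congr
          intro a' _
          rw [← List.concat_eq_append, ← List.concat_eq_append, List.concat_inj, hxy]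
          simp
        · rw [if_neg hxy, Finset.filter_false_of_mem, Finset.card_empty]
          intro a' _ hc
          rw [← List.concat_eq_append, ← List.concat_eq_append, List.concat_inj] at hc
          exact hxy hc.2
      rw [Finset.sum_congr rfl (fun x _ => hfib x)]
      by_cases hy : 1 ≤ y ∧ y ≤ n
      · have hx0 : ((⟨y - 1, by omega⟩ : Fin n) : ℕ) + 1 = y := by
          simp only
          omega
        rw [Finset.sum_eq_single (⟨y - 1, by omega⟩ : Fin n)]
        rotate_left
        · intro x _ hne
          rw [if_neg]
          intro hc
          apply hne
          apply Fin.ext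
          simp only
          omega
        · intro hc
          exact absurd (Finset.mem_univ _) hc
        rw [if_pos hx0]
        by_cases hvalid : wvalid n (W ++ [y])
        · obtain ⟨hndV, hmemV⟩ := hvalid
          have hyW : y ∉ W := by
            rcases List.nodup_append.1 hndV with ⟨-, -, hdisj⟩
            intro hc
            exact hdisj y hc y (by simp) rfl
          have hndW : W.Nodup := (List.nodup_append.1 hndV).1
          have hmemW : ∀ x' ∈ W, x' ∈ List.range' 1 n := fun x' hx' => hmemV x' (by simp [hx'])
          set S : Finset (List ℕ) := insert W ((Finset.range (W.length + 1)).image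
            (fun k => W.insertIdx k y)) with hS
          have hiff : ∀ a' : Fin r → Fin n,
              (ordL (waWord a')).erase y = W ↔ ordL (waWord a') ∈ S := by
            intro a'
            obtain ⟨hndU, hmemU⟩ := ordL_valid (waWord_mem a')
            set U := ordL (waWord a') with hU
            constructor
            · intro h
              by_cases hyU : y ∈ U
              · rw [hS, Finset.mem_insert]
                right
                rw [Finset.mem_image]
                refine ⟨U.idxOf y, ?_, ?_⟩
                · rw [Finset.mem_range]
                  have h1 : U.idxOf y < U.length := List.idxOf_lt_length_iff.2 hyU
                  have h2 : (U.erase y).length + 1 = U.length := List.length_erase_add_one hyU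
                  rw [h] at h2
                  omega
                · rw [← h]
                  exact insertIdx_erase U hyU hndU
              · rw [List.erase_of_not_mem hyU] at h
                rw [hS, Finset.mem_insert]
                left
                exact h
            · intro h
              rw [hS, Finset.mem_insert, Finset.mem_image] at h
              rcases h with h | ⟨k, hk, h⟩
              · rw [h, List.erase_of_not_mem hyW]
              · rw [← h, erase_insertIdx k W hyW]
          have hset : (Finset.univ.filter (fun a' : Fin r → Fin n =>
              (ordL (waWord a')).erase y = W))
              = (Finset.univ.filter (fun a' : Fin r → Fin n => ordL (waWord a') ∈ S)) := by
            apply Finset.filter_congr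
            intro a' _
            exact hiff a'
          rw [hset]
          rw [Finset.card_eq_sum_card_fiberwise (f := fun a' => ordL (waWord a')) (t := S)
            (s := Finset.univ.filter (fun a' : Fin r → Fin n => ordL (waWord a') ∈ S))
            (fun a' ha' => (Finset.mem_filter.1 (Finset.mem_coe.1 ha')).2)]
          have hterm : ∀ c ∈ S,
              ((Finset.univ.filter (fun a' : Fin r → Fin n => ordL (waWord a') ∈ S)).filter
                (fun a' => ordL (waWord a') = c)).card
              = if wvalid n c then stirling r c.length else 0 := by
            intro c hc
            rw [Finset.filter_filter, ← ih c]
            congr 1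
            apply Finset.filter_congr
            intro a' _
            constructor
            · exact fun hh => hh.2
            · exact fun hh => ⟨hh ▸ hc, hh⟩
          rw [Finset.sum_congr rfl hterm]
          have hWnotim : W ∉ (Finset.range (W.length + 1)).image (fun k => W.insertIdx k y) := by
            rw [Finset.mem_image]
            rintro ⟨k, hk, hkeq⟩
            rw [Finset.mem_range] at hk
            apply hyW
            rw [← hkeq]
            exact (mem_insertIdx_iff (by omega)).2 (Or.inl rfl)
          rw [hS, Finset.sum_insert hWnotim]
          rw [Finset.sum_image ?hinj]
          case hinj =>
            intro k1 hk1 k2 hk2 heq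
            rw [Finset.mem_coe, Finset.mem_range] at hk1 hk2
            have e1 : (W.insertIdx k1 y).idxOf y = k1 :=
              indexOf_insertIdx_self k1 W hyW (by omega)
            have e2 : (W.insertIdx k2 y).idxOf y = k2 :=
              indexOf_insertIdx_self k2 W hyW (by omega)
            rw [← e1, ← e2, show W.insertIdx k1 y = W.insertIdx k2 y from heq]
          have hvalW : wvalid n W := ⟨hndW, hmemW⟩
          rw [if_pos hvalW]
          have hvalk : ∀ k ∈ Finset.range (W.length + 1),
              (if wvalid n (W.insertIdx k y) then stirling r (W.insertIdx k y).length else 0)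
              = stirling r (W.length + 1) := by
            intro k hk
            rw [Finset.mem_range] at hk
            have htk : k ≤ W.length := by omega
            rw [if_pos, List.length_insertIdx_of_le_length htk]
            constructor
            · exact nodup_insertIdx k W hyW htk hndW
            · intro x' hx'
              rcases (mem_insertIdx_iff htk).1 hx' with h1 | h1
              · rw [List.mem_range'_1]; omega
              · exact hmemW x' h1
          rw [Finset.sum_congr rfl hvalk, Finset.sum_const, Finset.card_range,
            smul_eq_mul]
          rw [if_pos ⟨hndV, hmemV⟩]
          have : (W ++ [y]).length = W.length + 1 := by simp
          rw [this]
          show stirling r W.length + (W.length + 1) * stirling r (W.length + 1)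
            = stirling (r + 1) (W.length + 1)
          rw [show stirling (r + 1) (W.length + 1)
            = (W.length + 1) * stirling r (W.length + 1) + stirling r W.length from rfl]
          omega
        · rw [if_neg hvalid]
          rw [Finset.filter_false_of_mem, Finset.card_empty]
          intro a' _ hc
          obtain ⟨hndU, hmemU⟩ := ordL_valid (waWord_mem a')
          apply hvalid
          constructor
          · rw [← hc]
            apply List.nodup_append.2
            refine ⟨hndU.erase _, List.nodup_singleton _, ?_⟩
            intro z hz b hz' hzb
            rw [List.mem_singleton] at hz'
            subst hz'
            subst hzb
            exact (hndU.not_mem_erase) hz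
          · intro x' hx'
            rcases List.mem_append.1 hx' with h1 | h1
            · rw [← hc] at h1
              exact hmemU x' (List.mem_of_mem_erase h1)
            · rw [List.mem_singleton] at h1
              subst h1
              rw [List.mem_range'_1]
              omega
      · rw [Finset.sum_eq_zero, if_neg]
        · intro hc
          obtain ⟨-, hmemV⟩ := hc
          have := hmemV y (by simp)
          rw [List.mem_range'_1] at this
          omega
        · intro x _
          rw [if_neg]
          have := x.isLt
          omega
end Counting

section Assembly
variable {R : Type*} [CommRing R]

lemma imaj_waList_eq_statn {n r : ℕ} (a : Fin r → Fin n) :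
    imajList n (waList n (waWord a)) = statn n (ordL (waWord a)) := by
  obtain ⟨hfold, -, -⟩ := foldl_move_eq n (waWord a) (waWord_mem a)
  unfold waList
  rw [hfold]
  exact imajList_filter_append (ordL_valid (waWord_mem a))

lemma words_pairwise_disjoint (n : ℕ) :
    (↑(Finset.range (n + 1)) : Set ℕ).PairwiseDisjoint (words n) := by
  intro l1 _ l2 _ hne
  rw [Function.onFun, Finset.disjoint_left]
  intro V h1 h2
  rw [mem_words] at h1 h2
  exact hne (h1.2 ▸ h2.2)

theorem main_identity (q : R) (n r : ℕ) (hr : 0 < r) :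
    (∑ a : Fin r → Fin n, q ^ imajList n (waList n (waWord a)))
      = ∑ l ∈ Finset.Icc 1 n, (stirling r l : R) * qfall q n l := by
  have step1 : (∑ a : Fin r → Fin n, q ^ imajList n (waList n (waWord a)))
      = ∑ a : Fin r → Fin n, q ^ statn n (ordL (waWord a)) := by
    apply Finset.sum_congr rfl
    intro a _
    rw [imaj_waList_eq_statn]
  rw [step1]
  set T : Finset (List ℕ) := (Finset.range (n + 1)).biUnion (words n) with hT
  have hmaps : ∀ a : Fin r → Fin n, a ∈ (Finset.univ : Finset (Fin r → Fin n)) →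
      ordL (waWord a) ∈ T := by
    intro a _
    have hv := ordL_valid (waWord_mem a)
    rw [hT, Finset.mem_biUnion]
    refine ⟨(ordL (waWord a)).length, ?_, mem_words.2 ⟨hv, rfl⟩⟩
    rw [Finset.mem_range]
    have := wvalid_length_le hv
    omega
  rw [← Finset.sum_fiberwise_of_maps_to hmaps (fun a => q ^ statn n (ordL (waWord a)))]
  have hinner : ∀ V ∈ T,
      (∑ a ∈ Finset.univ.filter (fun a : Fin r → Fin n => ordL (waWord a) = V),
        q ^ statn n (ordL (waWord a)))
      = (stirling r V.length : R) * q ^ statn n V := by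
    intro V hV
    have hVval : wvalid n V := by
      rw [hT, Finset.mem_biUnion] at hV
      obtain ⟨l, -, hVw⟩ := hV
      exact (mem_words.1 hVw).1
    have : ∀ a ∈ Finset.univ.filter (fun a : Fin r → Fin n => ordL (waWord a) = V),
        q ^ statn n (ordL (waWord a)) = q ^ statn n V := by
      intro a ha
      rw [(Finset.mem_filter.1 ha).2]
    rw [Finset.sum_congr rfl this, Finset.sum_const, card_fiber n r V, if_pos hVval,
      nsmul_eq_mul]
  rw [Finset.sum_congr rfl hinner, hT, Finset.sum_biUnion (words_pairwise_disjoint n)]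
  have hlsum : ∀ l ∈ Finset.range (n + 1),
      (∑ V ∈ words n l, (stirling r V.length : R) * q ^ statn n V)
      = (stirling r l : R) * qfall q n l := by
    intro l _
    have : ∀ V ∈ words n l, (stirling r V.length : R) * q ^ statn n V
        = (stirling r l : R) * q ^ statn n V := by
      intro V hV
      rw [(mem_words.1 hV).2]
    rw [Finset.sum_congr rfl this, ← Finset.mul_sum, wsum_eq_qfall]
  rw [Finset.sum_congr rfl hlsum]
  rw [Finset.range_eq_Ico]
  rw [Finset.sum_eq_sum_Ico_succ_bot (by omega : 0 < n + 1)]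
  have h0 : (stirling r 0 : R) = 0 := by
    match r, hr with
    | (r' + 1), _ =>
      rw [show stirling (r' + 1) 0 = 0 from rfl]
      exact Nat.cast_zero
  rw [h0, zero_mul, zero_add, Finset.Ico_add_one_right_eq_Icc]
end Assembly

end Stmt0Development

/-- `Σ_{a ∈ {1,...,n}^r} q^{imaj(w_a)} = Σ_{l=1}^n S(r,l)[n][n-1]···[n-l+1]`. -/
theorem stmt0 {R : Type*} [CommRing R] (q : R) (n r : ℕ) (hn : 0 < n) (hr : 0 < r) :
    ∑ a : Fin r → Fin n, q ^ imajList n (waList n (waWord a)) =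
      ∑ l ∈ Finset.Icc 1 n, (stirling r l : R) * ∏ j ∈ Finset.range l, qint q (n - j) := by
  rw [main_identity q n r hr]
  apply Finset.sum_congr rfl
  intro l _
  rw [qfall]
end

section
/- The map sending a sequence a in {1,...,n}^r to the pair (shape(a), w_a) is a bijection from {1,...,n}^r onto the set of pairs (K, w) where K is a set partition of {1,...,r} with some number l ≤ min(n,r) of blocks and w is a permutation in D_{n,n-l}. -/
open Finset

lemma dedup_app (w : List ℕ) (x : ℕ) :
    (w ++ [x]).dedup = w.dedup.erase x ++ [x] := by
  induction w with
  | nil => simp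
  | cons y t ih =>
    by_cases hy : y ∈ t
    · rw [List.cons_append, List.dedup_cons_of_mem (by simp [hy]), ih,
        List.dedup_cons_of_mem hy]
    · by_cases hyx : y = x
      · subst hyx
        rw [List.cons_append, List.dedup_cons_of_mem (by simp), ih,
          List.dedup_cons_of_notMem hy, List.erase_cons_head,
          List.erase_of_not_mem (by simp [List.mem_dedup, hy])]
      · rw [List.cons_append, List.dedup_cons_of_notMem (by simp [hy, hyx]), ih,
          List.dedup_cons_of_notMem hy,
          List.erase_cons_tail (by simp [hyx]), List.cons_append]

lemma foldl_erase_append (w L : List ℕ) (hL : L.Nodup) :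
    w.foldl (fun l x => l.erase x ++ [x]) L
      = L.filter (fun y => y ∉ w) ++ w.dedup := by
  induction w using List.reverseRecOn generalizing L with
  | nil => simp
  | append_singleton w x ih =>
    rw [List.foldl_append, List.foldl_cons, List.foldl_nil, ih L hL, dedup_app]
    by_cases hx : x ∈ w
    · have h1 : x ∉ L.filter (fun y => y ∉ w) := by simp [hx]
      rw [List.erase_append_right _ h1, ← List.append_assoc]
      have : L.filter (fun y => y ∉ w) = L.filter (fun y => y ∉ w ++ [x]) := by
        apply List.filter_congr
        intro y hy
        by_cases hyx : y = x <;> by_cases hyw : y ∈ w <;> simp_all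
      rw [this]
    · rw [List.erase_of_not_mem (l := w.dedup) (a := x) (by simp [List.mem_dedup, hx])]
      by_cases hxL : x ∈ L
      · have h1 : x ∈ L.filter (fun y => y ∉ w) := by simp [hx, hxL]
        rw [List.erase_append_left _ h1, ← List.append_assoc]
        have : (L.filter (fun y => y ∉ w)).erase x = L.filter (fun y => y ∉ w ++ [x]) := by
          rw [(hL.filter _).erase_eq_filter, List.filter_filter]
          apply List.filter_congr
          intro y hy
          by_cases hyx : y = x <;> by_cases hyw : y ∈ w <;> simp_all
        rw [this]
      · have h1 : x ∉ L.filter (fun y => y ∉ w) := fun h => hxL (List.mem_of_mem_filter h)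
        rw [List.erase_append_right _ h1,
          List.erase_of_not_mem (l := w.dedup) (a := x) (by simp [List.mem_dedup, hx]),
          ← List.append_assoc]
        have : L.filter (fun y => y ∉ w) = L.filter (fun y => y ∉ w ++ [x]) := by
          apply List.filter_congr
          intro y hy
          have : y ≠ x := fun h => hxL (h ▸ hy)
          by_cases hyw : y ∈ w <;> simp_all
        rw [this]


def lastp (w : List ℕ) (i : ℕ) : Prop :=
  ∀ j, j < w.length → i < j → w.getD j 0 ≠ w.getD i 0

instance (w : List ℕ) : DecidablePred (lastp w) := fun i => by
  unfold lastp; infer_instance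

lemma dedup_eq_lastp (w : List ℕ) :
    w.dedup = ((List.range w.length).filter (fun i => lastp w i)).map (fun i => w.getD i 0) := by
  induction w using List.reverseRecOn with
  | nil => simp
  | append_singleton w x ih =>
    rw [dedup_app, ih]
    have hlen : (w ++ [x]).length = w.length + 1 := by simp
    rw [hlen, List.range_succ, List.filter_append]
    have hx : (List.filter (fun i => lastp (w ++ [x]) i) [w.length]) = [w.length] := by
      simp only [List.filter_cons, List.filter_nil]
      rw [if_pos]
      simp only [decide_eq_true_eq]
      intro j hj hj'
      omega
    rw [hx, List.map_append]
    have hgx : (w ++ [x]).getD w.length 0 = x := by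
      rw [List.getD_append_right _ _ _ _ le_rfl]; simp
    have hmain : ((List.range w.length).filter (fun i => lastp (w ++ [x]) i)).map
          (fun i => (w ++ [x]).getD i 0)
        = (((List.range w.length).filter (fun i => lastp w i)).map
          (fun i => w.getD i 0)).erase x := by
      have hnd : (((List.range w.length).filter (fun i => lastp w i)).map
          (fun i => w.getD i 0)).Nodup := by
        rw [← ih]; exact w.nodup_dedup
      rw [hnd.erase_eq_filter, List.filter_map, List.filter_filter]
      have : ∀ i ∈ List.range w.length,
          (decide (lastp (w ++ [x]) i) : Bool)
            = (((fun y => y != x) ∘ fun i => w.getD i 0) i && decide (lastp w i)) := by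
        intro i hi
        rw [List.mem_range] at hi
        simp only [Function.comp, Bool.and_comm, decide_eq_true_eq, bne_iff_ne, ne_eq]
        have hgi : (w ++ [x]).getD i 0 = w.getD i 0 := List.getD_append _ _ _ _ hi
        by_cases h1 : lastp w i
        · by_cases h2 : w.getD i 0 = x
          · have : ¬ lastp (w ++ [x]) i := by
              intro h
              exact h w.length (by simp) hi (by rw [hgx, hgi, h2])
            simp only [this, h1]
            simp
            simpa [List.getD] using h2
          · have : lastp (w ++ [x]) i := by
              intro j hj hj'
              rw [hlen] at hj
              rcases Nat.lt_or_ge j w.length with hj2 | hj2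
              · rw [List.getD_append _ _ _ _ hj2, hgi]; exact h1 j hj2 hj'
              · have : j = w.length := by omega
                subst this
                rw [hgx, hgi]; exact fun h => h2 h.symm
            simp only [this, h1]
            simp
            simpa [List.getD] using h2
        · have : ¬ lastp (w ++ [x]) i := by
            intro h
            apply h1
            intro j hj hj'
            have := h j (by simp; omega) hj'
            rwa [List.getD_append _ _ _ _ hj, hgi] at this
          simp [this, h1]
      rw [List.filter_congr this]
      apply List.map_congr_left
      intro i hi
      exact List.getD_append _ _ _ _ (List.mem_range.mp (List.mem_of_mem_filter hi))
    rw [hmain]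
    simp only [List.map_cons, List.map_nil, hgx]
section Aux
variable {n r : ℕ}

lemma waWord_length (a : Fin r → Fin n) : (waWord a).length = r := by simp [waWord]

lemma waWord_getD (a : Fin r → Fin n) (i : ℕ) (h : i < r) :
    (waWord a).getD i 0 = (a ⟨i, h⟩ : ℕ) + 1 := by
  rw [List.getD_eq_getElem _ _ (by simpa [waWord_length])]
  simp [waWord]

lemma mem_waWord (a : Fin r → Fin n) (x : ℕ) :
    x ∈ waWord a ↔ ∃ i, (a i : ℕ) + 1 = x := by
  simp [waWord, List.mem_ofFn, Set.mem_range]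

/-- the fiber of `i` -/
def fib (a : Fin r → Fin n) (i : Fin r) : Finset (Fin r) :=
  Finset.univ.filter fun j => a j = a i

lemma mem_fib (a : Fin r → Fin n) (i j : Fin r) : j ∈ fib a i ↔ a j = a i := by
  simp [fib]

lemma mem_shapeFn_iff (a : Fin r → Fin n) (B : Finset (Fin r)) :
    B ∈ shapeFn a ↔ ∃ i, B = fib a i := by
  simp only [shapeFn, Finset.mem_image, Finset.mem_univ, true_and]
  constructor
  · rintro ⟨v, ⟨i, rfl⟩, rfl⟩; exact ⟨i, rfl⟩
  · rintro ⟨i, rfl⟩; exact ⟨a i, ⟨i, rfl⟩, rfl⟩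

lemma block_eq_fib (a : Fin r → Fin n) {B : Finset (Fin r)} {i : Fin r}
    (hB : B ∈ shapeFn a) (hi : i ∈ B) : B = fib a i := by
  obtain ⟨j, rfl⟩ := (mem_shapeFn_iff a B).mp hB
  rw [mem_fib] at hi
  ext k; rw [mem_fib, mem_fib, hi]

lemma isSetPartition_shapeFn (a : Fin r → Fin n) : isSetPartition (shapeFn a) := by
  constructor
  · intro B hB
    obtain ⟨i, rfl⟩ := (mem_shapeFn_iff a B).mp hB
    exact ⟨i, (mem_fib a i i).mpr rfl⟩
  · intro i
    refine ⟨fib a i, ⟨(mem_shapeFn_iff a _).mpr ⟨i, rfl⟩, (mem_fib a i i).mpr rfl⟩, ?_⟩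
    rintro B ⟨hB, hiB⟩
    exact block_eq_fib a hB hiB

lemma card_shapeFn (a : Fin r → Fin n) :
    (shapeFn a).card = (Finset.univ.image a).card := by
  rw [shapeFn]
  apply Finset.card_image_of_injOn
  intro v hv v' hv' h
  obtain ⟨i, _, rfl⟩ := Finset.mem_image.mp hv
  simp only at h
  have : i ∈ Finset.univ.filter fun j => a j = a i := by simp
  rw [h] at this
  simpa using (Finset.mem_filter.mp this).2

lemma toFinset_waWord (a : Fin r → Fin n) :
    (waWord a).toFinset = Finset.univ.image (fun i => (a i : ℕ) + 1) := by
  ext x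
  simp [mem_waWord, eq_comm]

lemma dedup_length_waWord (a : Fin r → Fin n) :
    (waWord a).dedup.length = (Finset.univ.image a).card := by
  rw [← List.card_toFinset, toFinset_waWord]
  have : (Finset.univ.image fun i => (a i : ℕ) + 1)
      = (Finset.univ.image a).image (fun v : Fin n => (v : ℕ) + 1) := by
    rw [Finset.image_image]; rfl
  rw [this, Finset.card_image_of_injective _ (fun x y h => Fin.val_injective (by omega))]

lemma shape_rel {a b : Fin r → Fin n} (h : shapeFn a = shapeFn b) (i j : Fin r) :
    a i = a j ↔ b i = b j := by
  have h1 : fib a j ∈ shapeFn b := h ▸ (mem_shapeFn_iff a _).mpr ⟨j, rfl⟩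
  have h2 : fib a j = fib b j := block_eq_fib b h1 ((mem_fib a j j).mpr rfl)
  constructor
  · intro hij
    have : i ∈ fib a j := (mem_fib a j i).mpr hij
    rw [h2, mem_fib] at this; exact this
  · intro hij
    have : i ∈ fib b j := (mem_fib b j i).mpr hij
    rw [← h2, mem_fib] at this; exact this

end Aux

section Main
variable {n r : ℕ}

lemma mem_range'_iff {x : ℕ} : x ∈ List.range' 1 n ↔ 1 ≤ x ∧ x ≤ n := by
  rw [List.mem_range']
  constructor
  · rintro ⟨i, hi, rfl⟩; omega
  · rintro ⟨h1, h2⟩; exact ⟨x - 1, by omega, by omega⟩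

lemma waWord_subset (a : Fin r → Fin n) {x : ℕ} (hx : x ∈ waWord a) :
    x ∈ List.range' 1 n := by
  obtain ⟨i, rfl⟩ := (mem_waWord a x).mp hx
  exact mem_range'_iff.mpr ⟨by omega, by have := (a i).isLt; omega⟩

lemma waList_decomp (a : Fin r → Fin n) :
    waList n (waWord a)
      = (List.range' 1 n).filter (fun y => y ∉ waWord a) ++ (waWord a).dedup :=
  foldl_erase_append _ _ (List.nodup_range' (s := 1) (n := n))

lemma filter_not_mem_length (a : Fin r → Fin n) :
    ((List.range' 1 n).filter (fun y => y ∉ waWord a)).length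
      = n - (Finset.univ.image a).card := by
  have hnd : ((List.range' 1 n).filter (fun y => y ∉ waWord a)).Nodup :=
    (List.nodup_range' (s := 1) (n := n)).filter _
  rw [← List.toFinset_card_of_nodup hnd]
  have : ((List.range' 1 n).filter (fun y => y ∉ waWord a)).toFinset
      = (List.range' 1 n).toFinset \ (waWord a).toFinset := by
    ext x
    simp only [List.toFinset_filter, Finset.mem_filter, List.mem_toFinset, Finset.mem_sdiff,
      decide_eq_true_eq]
  rw [this, Finset.card_sdiff_of_subset (fun x hx => by
      rw [List.mem_toFinset] at *; exact waWord_subset a hx)]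
  rw [List.toFinset_card_of_nodup (List.nodup_range' (s := 1) (n := n)),
    List.card_toFinset, dedup_length_waWord, List.length_range']

lemma dedup_sub_word (a : Fin r → Fin n) {x : ℕ} (hx : x ∈ (waWord a).dedup) :
    x ∈ waWord a := List.mem_dedup.mp hx

lemma waList_perm (a : Fin r → Fin n) :
    (waList n (waWord a)).Perm (List.range' 1 n) := by
  rw [waList_decomp]
  apply List.perm_of_nodup_nodup_toFinset_eq
  · apply List.Nodup.append ((List.nodup_range' (s := 1) (n := n)).filter _) (waWord a).nodup_dedup
    intro x hx hx'
    have := List.of_mem_filter hx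
    simp only [decide_eq_true_eq] at this
    exact this (List.mem_dedup.mp hx')
  · exact List.nodup_range' (s := 1) (n := n)
  · ext x
    simp only [List.toFinset_append, Finset.mem_union, List.mem_toFinset, List.mem_filter,
      decide_eq_true_eq, List.mem_dedup]
    constructor
    · rintro (⟨h, _⟩ | h); · exact h
      · exact waWord_subset a h
    · intro h
      by_cases hw : x ∈ waWord a
      · exact Or.inr hw
      · exact Or.inl ⟨h, hw⟩

lemma waList_card_bound (a : Fin r → Fin n) :
    (shapeFn a).card ≤ min n r := by
  rw [card_shapeFn]
  refine le_min ?_ ?_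
  · calc (Finset.univ.image a).card ≤ (Finset.univ : Finset (Fin n)).card :=
        Finset.card_le_card (Finset.subset_univ _)
    _ = n := by simp
  · calc (Finset.univ.image a).card ≤ (Finset.univ : Finset (Fin r)).card :=
        Finset.card_image_le
    _ = r := by simp

lemma waList_take_sorted (a : Fin r → Fin n) :
    List.Pairwise (· < ·) ((waList n (waWord a)).take (n - (shapeFn a).card)) := by
  rw [waList_decomp, card_shapeFn, ← filter_not_mem_length a, List.take_left]
  exact (List.pairwise_lt_range' (s := 1) (n := n)).filter _

end Main

section Inj
variable {n r : ℕ}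

lemma lastp_waWord (a : Fin r → Fin n) (i : ℕ) (hi : i < r) :
    lastp (waWord a) i ↔ ∀ j : Fin r, i < (j : ℕ) → a j ≠ a ⟨i, hi⟩ := by
  unfold lastp
  rw [waWord_length]
  constructor
  · intro h j hj hne
    exact h j j.isLt hj (by rw [waWord_getD a j j.isLt, waWord_getD a i hi, Fin.eta, hne])
  · intro h j hj hij hne
    rw [waWord_getD a j hj, waWord_getD a i hi] at hne
    exact h ⟨j, hj⟩ hij (by omega)

lemma max_fib_lastp (a : Fin r → Fin n) (i : Fin r) :
    lastp (waWord a) ((fib a i).max' ⟨i, (mem_fib a i i).mpr rfl⟩ : Fin r) := by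
  set j := (fib a i).max' ⟨i, (mem_fib a i i).mpr rfl⟩ with hj
  have hjF : j ∈ fib a i := Finset.max'_mem _ _
  rw [lastp_waWord a _ j.isLt]
  intro k hk hne
  have : a k = a i := by
    rw [Fin.eta] at hne
    rw [hne, (mem_fib a i j).mp hjF]
  have : k ∈ fib a i := (mem_fib a i k).mpr this
  have := Finset.le_max' _ _ this
  rw [← hj] at this
  exact absurd (Fin.le_def.mp this) (by omega)

lemma inj_aux {a b : Fin r → Fin n} (hs : shapeFn a = shapeFn b)
    (hw : waList n (waWord a) = waList n (waWord b)) : a = b := by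
  have hcard : (Finset.univ.image a).card = (Finset.univ.image b).card := by
    rw [← card_shapeFn, ← card_shapeFn, hs]
  rw [waList_decomp, waList_decomp] at hw
  have hlen : ((List.range' 1 n).filter (fun y => y ∉ waWord a)).length
      = ((List.range' 1 n).filter (fun y => y ∉ waWord b)).length := by
    rw [filter_not_mem_length, filter_not_mem_length, hcard]
  have hd := (List.append_inj hw hlen).2
  rw [dedup_eq_lastp, dedup_eq_lastp, waWord_length, waWord_length] at hd
  haveI : IsAntisymm ℕ (· < ·) := ⟨fun a b h1 h2 => absurd h1 (asymm h2)⟩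
  have hP : (List.range r).filter (fun i => lastp (waWord a) i)
      = (List.range r).filter (fun i => lastp (waWord b) i) := by
    apply List.filter_congr
    intro i hi
    rw [List.mem_range] at hi
    rw [decide_eq_decide, lastp_waWord a i hi, lastp_waWord b i hi]
    constructor
    · intro h j hj hne
      exact h j hj ((shape_rel hs j ⟨i, hi⟩).mpr hne)
    · intro h j hj hne
      exact h j hj ((shape_rel hs j ⟨i, hi⟩).mp hne)
  rw [hP, List.map_inj_left] at hd
  funext i
  set j := (fib a i).max' ⟨i, (mem_fib a i i).mpr rfl⟩ with hjdef
  have hjP : ((j : ℕ)) ∈ (List.range r).filter (fun i => lastp (waWord b) i) := by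
    rw [← hP]
    exact List.mem_filter.mpr ⟨List.mem_range.mpr j.isLt, by
      simpa using max_fib_lastp a i⟩
  have hab := hd _ hjP
  rw [waWord_getD a _ j.isLt, waWord_getD b _ j.isLt] at hab
  simp only [Fin.eta] at hab
  have hab : a j = b j := Fin.val_injective (by omega)
  have haji : a j = a i := (mem_fib a i j).mp (Finset.max'_mem _ _)
  have hbji : b j = b i := (shape_rel hs j i).mp haji
  rw [← haji, hab, hbji]

end Inj

section Surj
variable {n r : ℕ}

variable {K : Finset (Finset (Fin r))}

/-- the block of `K` containing `i` -/
def blkD (hK : isSetPartition K) (i : Fin r) : Finset (Fin r) :=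
  Finset.choose (fun B => i ∈ B) K (hK.2 i)

lemma blkD_mem (hK : isSetPartition K) (i : Fin r) : blkD hK i ∈ K :=
  Finset.choose_mem _ _ _

lemma mem_blkD (hK : isSetPartition K) (i : Fin r) : i ∈ blkD hK i :=
  Finset.choose_property (fun B => i ∈ B) _ _

lemma blkD_eq_of_mem (hK : isSetPartition K) {B : Finset (Fin r)} {i : Fin r}
    (hB : B ∈ K) (hi : i ∈ B) : B = blkD hK i := by
  obtain ⟨C, _, hC⟩ := hK.2 i
  rw [hC B ⟨hB, hi⟩, hC (blkD hK i) ⟨blkD_mem hK i, mem_blkD hK i⟩]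

lemma blkD_idem (hK : isSetPartition K) {i j : Fin r} (h : j ∈ blkD hK i) :
    blkD hK j = blkD hK i :=
  (blkD_eq_of_mem hK (blkD_mem hK i) h).symm

lemma mem_blkD_iff (hK : isSetPartition K) {i j : Fin r} :
    j ∈ blkD hK i ↔ blkD hK j = blkD hK i :=
  ⟨blkD_idem hK, fun h => h ▸ mem_blkD hK j⟩

/-- the maximum of the block containing `i` -/
def mxD (hK : isSetPartition K) (i : Fin r) : Fin r :=
  (blkD hK i).max' ⟨i, mem_blkD hK i⟩

lemma mxD_mem (hK : isSetPartition K) (i : Fin r) : mxD hK i ∈ blkD hK i :=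
  Finset.max'_mem _ _

lemma mxD_eq_iff (hK : isSetPartition K) {i j : Fin r} :
    mxD hK i = mxD hK j ↔ blkD hK i = blkD hK j := by
  constructor
  · intro h
    have h1 : blkD hK (mxD hK i) = blkD hK i := blkD_idem hK (mxD_mem hK i)
    have h2 : blkD hK (mxD hK j) = blkD hK j := blkD_idem hK (mxD_mem hK j)
    rw [← h1, ← h2, h]
  · intro h
    unfold mxD
    congr 1

lemma mxD_idem (hK : isSetPartition K) (i : Fin r) : mxD hK (mxD hK i) = mxD hK i :=
  (mxD_eq_iff hK).mpr (blkD_idem hK (mxD_mem hK i))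

lemma mem_image_mxD (hK : isSetPartition K) {x : Fin r} :
    x ∈ Finset.univ.image (mxD hK) ↔ mxD hK x = x := by
  constructor
  · rintro h
    obtain ⟨i, _, rfl⟩ := Finset.mem_image.mp h
    exact mxD_idem hK i
  · intro h
    exact Finset.mem_image.mpr ⟨x, Finset.mem_univ x, h⟩

lemma card_image_mxD (hK : isSetPartition K) :
    (Finset.univ.image (mxD hK)).card = K.card := by
  refine Finset.card_bij' (fun m _ => blkD hK m) (fun B hB => B.max' (hK.1 B hB))
    (fun m _ => blkD_mem hK m) ?_ ?_ ?_
  · intro B hB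
    rw [mem_image_mxD hK]
    have h1 : B.max' (hK.1 B hB) ∈ B := Finset.max'_mem _ _
    have h2 : B = blkD hK (B.max' (hK.1 B hB)) := blkD_eq_of_mem hK hB h1
    unfold mxD
    congr 1 <;> rw [← h2]
  · intro m hm
    rw [mem_image_mxD hK] at hm
    conv_rhs => rw [← hm]
    unfold mxD
    rfl
  · intro B hB
    exact (blkD_eq_of_mem hK hB (Finset.max'_mem _ _)).symm

end Surj

lemma map_indexOf {α β : Type*} [DecidableEq α] (L : List α) (hL : L.Nodup) (f : ℕ → β) :
    L.map (fun m => f (L.idxOf m)) = (List.range L.length).map f := by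
  apply List.ext_getElem (by simp)
  intro k h1 h2
  simp only [List.getElem_map, List.getElem_range]
  rw [List.Nodup.idxOf_getElem hL]

section Surj2
variable {n r : ℕ}

lemma surj_aux (hn : 0 < n) (K : Finset (Finset (Fin r))) (w : List ℕ)
    (hK : isSetPartition K) (hcard : K.card ≤ min n r)
    (hperm : w.Perm (List.range' 1 n))
    (hsort : List.Pairwise (· < ·) (w.take (n - K.card))) :
    ∃ a : Fin r → Fin n, shapeFn a = K ∧ waList n (waWord a) = w := by
  have hln : K.card ≤ n := hcard.trans (min_le_left _ _)
  have hlr : K.card ≤ r := hcard.trans (min_le_right _ _)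
  set M : Finset (Fin r) := Finset.univ.image (mxD hK) with hM
  set L : List (Fin r) := M.sort (· ≤ ·) with hL
  have hLlen : L.length = K.card := (Finset.length_sort _).trans (card_image_mxD hK)
  have hLnodup : L.Nodup := Finset.sort_nodup M _
  have hwlen : w.length = n := by simpa using hperm.length_eq
  have hwnodup : w.Nodup := hperm.nodup_iff.mpr (List.nodup_range' (s := 1) (n := n))
  have hwmem : ∀ x, x ∈ w ↔ (1 ≤ x ∧ x ≤ n) := fun x => hperm.mem_iff.trans mem_range'_iff
  set c : ℕ → ℕ := fun k => w.getD (n - K.card + k) 1 with hc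
  have hcin : ∀ k, k < K.card → ∀ (hb : n - K.card + k < w.length), c k = w[n - K.card + k] :=
    fun k hk hb => List.getD_eq_getElem _ _ hb
  have hcb : ∀ k, k < K.card → n - K.card + k < w.length := by omega
  have hcpos : ∀ k, 1 ≤ c k ∧ c k ≤ n := by
    intro k
    by_cases hb : n - K.card + k < w.length
    · have : c k ∈ w := by
        show w.getD (n - K.card + k) 1 ∈ w
        rw [List.getD_eq_getElem _ _ hb]; exact List.getElem_mem _
      exact (hwmem _).mp this
    · have : c k = 1 := List.getD_eq_default _ _ (by omega)
      omega
  have hcinj : ∀ k1, k1 < K.card → ∀ k2, k2 < K.card → c k1 = c k2 → k1 = k2 := by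
    intro k1 h1 k2 h2 h
    rw [hcin k1 h1 (hcb k1 h1), hcin k2 h2 (hcb k2 h2)] at h
    have := (hwnodup.getElem_inj_iff).mp h
    omega
  set rk : Fin r → ℕ := fun i => L.idxOf (mxD hK i) with hrkdef
  have hmxL : ∀ i, mxD hK i ∈ L := fun i =>
    (Finset.mem_sort _).mpr ((mem_image_mxD hK).mpr (mxD_idem hK i))
  have hrk : ∀ i, rk i < K.card := fun i =>
    hLlen ▸ List.idxOf_lt_length_iff.mpr (hmxL i)
  have hrkget : ∀ i, L[rk i]'(hLlen ▸ hrk i) = mxD hK i := fun i =>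
    List.getElem_idxOf _
  have hrkinj : ∀ i j, rk i = rk j → mxD hK i = mxD hK j := by
    intro i j h
    rw [← hrkget i, ← hrkget j]
    simp only [h]
  set a : Fin r → Fin n := fun i => ⟨c (rk i) - 1, by have := hcpos (rk i); omega⟩ with ha
  have haplus : ∀ i, (a i : ℕ) + 1 = c (rk i) := by
    intro i; have := hcpos (rk i); simp [ha]; omega
  have haiff : ∀ i j, a i = a j ↔ blkD hK i = blkD hK j := by
    intro i j
    rw [← mxD_eq_iff hK]
    constructor
    · intro h
      apply hrkinj
      have h' : (a i : ℕ) + 1 = (a j : ℕ) + 1 := by rw [h]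
      rw [haplus, haplus] at h'
      exact hcinj _ (hrk i) _ (hrk j) h'
    · intro h
      have hreq : rk i = rk j := by rw [hrkdef]; simp only [h]
      have h1 := haplus i
      have h2 := haplus j
      rw [hreq] at h1
      exact Fin.val_injective (by omega)
  have hfib : ∀ i, fib a i = blkD hK i := by
    intro i
    ext j
    rw [mem_fib, haiff, mem_blkD_iff hK]
  have hshape : shapeFn a = K := by
    ext B
    rw [mem_shapeFn_iff]
    constructor
    · rintro ⟨i, rfl⟩
      rw [hfib]; exact blkD_mem hK i
    · intro hB
      obtain ⟨i, hi⟩ := hK.1 B hB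
      exact ⟨i, by rw [hfib]; exact blkD_eq_of_mem hK hB hi⟩
  have hlastp : ∀ x (hx : x < r), lastp (waWord a) x ↔ mxD hK ⟨x, hx⟩ = ⟨x, hx⟩ := by
    intro x hx
    rw [lastp_waWord a x hx]
    constructor
    · intro h
      by_contra hne
      have hmem : mxD hK ⟨x, hx⟩ ∈ blkD hK ⟨x, hx⟩ := mxD_mem hK _
      have hle : (⟨x, hx⟩ : Fin r) ≤ mxD hK ⟨x, hx⟩ := Finset.le_max' _ _ (mem_blkD hK _)
      have hlt : x < (mxD hK ⟨x, hx⟩ : ℕ) := by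
        rcases lt_or_eq_of_le hle with h' | h'
        · exact h'
        · exact absurd h'.symm hne
      exact h _ hlt ((haiff _ _).mpr (blkD_idem hK hmem))
    · intro h j hj hne
      have : j ∈ blkD hK ⟨x, hx⟩ := (mem_blkD_iff hK).mpr ((haiff _ _).mp hne)
      have := Finset.le_max' _ _ this
      unfold mxD at h
      rw [h] at this
      have hle2 : (j : ℕ) ≤ x := Fin.le_def.mp this
      omega
  haveI : IsAntisymm ℕ (· < ·) := ⟨fun a b h1 h2 => absurd h1 (asymm h2)⟩
  have hP : (List.range r).filter (fun i => lastp (waWord a) i)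
      = L.map Fin.val := by
    refine (fun hp h1 h2 => List.Perm.eq_of_pairwise' (r := (· < ·)) h1 h2 hp) ?_ ?_ ?_
    · apply List.perm_of_nodup_nodup_toFinset_eq
      · exact ((List.pairwise_lt_range (n := r)).filter _).nodup
      · exact (List.Pairwise.map Fin.val (fun x y (h : x < y) => Fin.lt_def.mp h)
          (Finset.sortedLT_sort M).pairwise).nodup
      · ext x
        simp only [List.mem_toFinset, List.mem_filter, List.mem_range, decide_eq_true_eq,
          List.mem_map]
        constructor
        · rintro ⟨hx, hl⟩
          exact ⟨⟨x, hx⟩, (Finset.mem_sort _).mpr ((mem_image_mxD hK).mpr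
            ((hlastp x hx).mp hl)), rfl⟩
        · rintro ⟨m, hm, rfl⟩
          refine ⟨m.isLt, (hlastp m m.isLt).mpr ?_⟩
          have : mxD hK m = m := (mem_image_mxD hK).mp ((Finset.mem_sort _).mp hm)
          simpa using this
    · exact (List.pairwise_lt_range (n := r)).filter _
    · exact List.Pairwise.map Fin.val (fun x y (h : x < y) => Fin.lt_def.mp h)
        (Finset.sortedLT_sort M).pairwise
  have hstep : (waWord a).dedup = (List.range K.card).map c := by
    rw [dedup_eq_lastp, waWord_length, hP]
    apply List.ext_getElem (by simp [hLlen])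
    intro k h1 h2
    have hk : k < L.length := by simpa using h1
    simp only [List.getElem_map, List.getElem_range]
    have hmem : L[k] ∈ L := List.getElem_mem _
    have hfix : mxD hK (L[k]) = L[k] := (mem_image_mxD hK).mp ((Finset.mem_sort _).mp hmem)
    rw [waWord_getD a _ (L[k]).isLt]
    simp only [Fin.eta]
    rw [haplus]
    show c (rk L[k]) = c k
    rw [hrkdef]
    simp only []
    rw [hfix, List.Nodup.idxOf_getElem hLnodup]
  have hdedup : (waWord a).dedup = w.drop (n - K.card) := by
    rw [hstep]
    apply List.ext_getElem
    · simp [hwlen]; omega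
    · intro k h1 h2
      simp only [List.getElem_map, List.getElem_range, List.getElem_drop]
      rw [List.length_map, List.length_range] at h1
      rw [hcin k h1 (hcb k h1)]
  have htake : (List.range' 1 n).filter (fun y => y ∉ waWord a) = w.take (n - K.card) := by
    refine (fun hp h1 h2 => List.Perm.eq_of_pairwise' (r := (· < ·)) h1 h2 hp) ?_ ?_ ?_
    · apply List.perm_of_nodup_nodup_toFinset_eq
      · exact (List.nodup_range' (s := 1) (n := n)).filter _
      · exact (List.take_sublist _ _).nodup hwnodup
      · ext x
        simp only [List.mem_toFinset, List.mem_filter, decide_eq_true_eq]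
        have hxw : x ∈ waWord a ↔ x ∈ w.drop (n - K.card) := by
          rw [← List.mem_dedup, hdedup]
        have hsplit : x ∈ w ↔ x ∈ w.take (n - K.card) ∨ x ∈ w.drop (n - K.card) := by
          conv_lhs => rw [← List.take_append_drop (n - K.card) w]
          exact List.mem_append
        have hdisj : x ∈ w.take (n - K.card) → x ∉ w.drop (n - K.card) := by
          intro h1 h2
          have hnd := hwnodup
          rw [← List.take_append_drop (n - K.card) w, List.nodup_append'] at hnd
          exact hnd.2.2 h1 h2
        constructor
        · rintro ⟨hx, hna⟩
          have hxw2 : x ∈ w := (hwmem x).mpr (mem_range'_iff.mp hx)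
          rcases hsplit.mp hxw2 with h | h
          · exact h
          · exact absurd (hxw.mpr h) hna
        · intro h
          refine ⟨mem_range'_iff.mpr ((hwmem x).mp (hsplit.mpr (Or.inl h))), ?_⟩
          intro hxa
          exact hdisj h (hxw.mp hxa)
    · exact (List.pairwise_lt_range' (s := 1) (n := n)).filter _
    · exact hsort
  exact ⟨a, hshape, by rw [waList_decomp, htake, hdedup, List.take_append_drop]⟩

end Surj2


/-- `a ↦ (shape(a), w_a)` is a bijection from `{1,...,n}^r` onto pairs `(K, w)`
where `K` is a set partition of `{1,...,r}` with `l ≤ min(n,r)` blocks and `w ∈ D_{n,n-l}`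
(a permutation word of `(1,...,n)` whose first `n - l` entries increase). -/
theorem stmt6 (n r : ℕ) (hn : 0 < n) (hr : 0 < r) :
    Set.BijOn (fun a : Fin r → Fin n => (shapeFn a, waList n (waWord a))) Set.univ
      {p : Finset (Finset (Fin r)) × List ℕ |
        isSetPartition p.1 ∧ p.1.card ≤ min n r ∧
        List.Perm p.2 (List.range' 1 n) ∧
        List.Pairwise (· < ·) (p.2.take (n - p.1.card))} := by
  refine ⟨?_, ?_, ?_⟩
  · intro a _
    simp only [Set.mem_setOf_eq]
    exact ⟨isSetPartition_shapeFn a, waList_card_bound a, waList_perm a, waList_take_sorted a⟩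
  · intro a _ b _ h
    exact inj_aux (congrArg Prod.fst h) (congrArg Prod.snd h)
  · intro p hp
    simp only [Set.mem_setOf_eq] at hp
    obtain ⟨hK, hcard, hperm, hsort⟩ := hp
    obtain ⟨a, h1, h2⟩ := surj_aux hn p.1 p.2 hK hcard hperm hsort
    refine ⟨a, Set.mem_univ a, ?_⟩
    simp only
    rw [h1, h2]
end

section
/- If a sequence a in {1,...,n}^r has exactly l distinct entries, then the permutation w_a lies in D_{n,n-l}, i.e., the first n-l entries of w_a in one-line notation are increasing. -/
open Finset

lemma foldl_erase_append_struct (n : ℕ) (w : List ℕ) (hw : ∀ x ∈ w, x ∈ List.range' 1 n) :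
    ∀ (P Q : List ℕ), P.Sublist (List.range' 1 n) → Q.Nodup →
      (P ++ Q).Perm (List.range' 1 n) →
      ∃ P' Q', w.foldl (fun l x => l.erase x ++ [x]) (P ++ Q) = P' ++ Q' ∧
        P'.Sublist (List.range' 1 n) ∧ Q'.Nodup ∧ (P' ++ Q').Perm (List.range' 1 n) ∧
        Q'.toFinset ⊆ Q.toFinset ∪ w.toFinset := by
  induction w with
  | nil => intro P Q hP hQ hperm; exact ⟨P, Q, rfl, hP, hQ, hperm, by simp⟩
  | cons x w ih =>
    intro P Q hP hQ hperm
    have hx : x ∈ List.range' 1 n := hw x (by simp)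
    have hnodup : (P ++ Q).Nodup := hperm.nodup_iff.mpr List.nodup_range'
    have hxmem : x ∈ P ++ Q := hperm.mem_iff.mpr hx
    have hw' : ∀ y ∈ w, y ∈ List.range' 1 n := fun y hy => hw y (by simp [hy])
    simp only [List.foldl_cons]
    by_cases hxP : x ∈ P
    · have hxQ : x ∉ Q := fun h => (List.disjoint_of_nodup_append hnodup) hxP h
      have herase : (P ++ Q).erase x ++ [x] = P.erase x ++ (Q ++ [x]) := by
        rw [List.erase_append_left _ hxP, List.append_assoc]
      rw [herase]
      obtain ⟨P', Q', h1, h2, h3, h4, h5⟩ := ih hw' (P.erase x) (Q ++ [x])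
        ((P.erase_sublist).trans hP)
        (by simp [List.nodup_append, hQ, hxQ]; intro a ha h; exact hxQ (h ▸ ha))
        (by
          refine List.Perm.trans ?_ hperm
          have e1 : P.erase x ++ (Q ++ [x]) = (P.erase x ++ Q) ++ [x] :=
            (List.append_assoc _ _ _).symm
          have p2 : ((P.erase x ++ Q) ++ [x]).Perm ([x] ++ (P.erase x ++ Q)) :=
            List.perm_append_comm
          have p4 : ((x :: P.erase x) ++ Q).Perm (P ++ Q) :=
            List.Perm.append_right Q (List.perm_cons_erase hxP).symm
          rw [e1]
          exact p2.trans p4)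
      refine ⟨P', Q', h1, h2, h3, h4, fun y hy => ?_⟩
      have := h5 hy
      simp only [Finset.mem_union, List.mem_toFinset, List.mem_append, List.mem_singleton,
        List.mem_cons] at this ⊢
      tauto
    · have hxQ : x ∈ Q := by
        rcases List.mem_append.mp hxmem with h | h
        · exact absurd h hxP
        · exact h
      have herase : (P ++ Q).erase x ++ [x] = P ++ (Q.erase x ++ [x]) := by
        rw [List.erase_append_right _ hxP, List.append_assoc]
      rw [herase]
      obtain ⟨P', Q', h1, h2, h3, h4, h5⟩ := ih hw' P (Q.erase x ++ [x]) hP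
        (by simp [List.nodup_append, hQ.erase x, fun h => hQ.not_mem_erase h]; intro a ha h; rw [h] at ha; exact ((hQ.mem_erase_iff).1 ha).1 rfl)
        (by
          refine List.Perm.trans (List.Perm.append_left P ?_) hperm
          exact List.perm_append_comm.trans (List.perm_cons_erase hxQ).symm)
      refine ⟨P', Q', h1, h2, h3, h4, fun y hy => ?_⟩
      have := h5 hy
      simp only [Finset.mem_union, List.mem_toFinset, List.mem_append, List.mem_singleton,
        List.mem_cons] at this ⊢
      rcases this with (h | h) | h
      · exact Or.inl (List.mem_of_mem_erase h)
      · exact Or.inr (Or.inl (by simpa using h))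
      · exact Or.inr (Or.inr h)

private theorem stmt7_aux (n r : ℕ) (a : Fin r → Fin n) (l : ℕ)
    (hl : (Finset.univ.image a).card = l) :
    List.Pairwise (· < ·) ((waList n (List.ofFn fun i => (a i : ℕ) + 1)).take (n - l)) := by
  set w : List ℕ := List.ofFn fun i => (a i : ℕ) + 1 with hwdef
  have hw : ∀ x ∈ w, x ∈ List.range' 1 n := by
    intro x hx
    rw [hwdef, List.mem_ofFn] at hx
    obtain ⟨i, rfl⟩ := hx
    rw [List.mem_range'_1]
    have := (a i).isLt
    constructor <;> omega
  obtain ⟨P', Q', h1, h2, h3, h4, h5⟩ :=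
    foldl_erase_append_struct n w hw (List.range' 1 n) [] (List.Sublist.refl _)
      List.nodup_nil (by simp)
  have hres : waList n w = P' ++ Q' := by
    simpa [waList] using h1
  -- card of w.toFinset is l
  have hwts : w.toFinset = Finset.univ.image fun i => (a i : ℕ) + 1 :=
    (Fin.univ_image_def _).symm
  have hcard : w.toFinset.card = l := by
    rw [hwts]
    have : (Finset.univ.image fun i => (a i : ℕ) + 1) =
        (Finset.univ.image a).image fun v : Fin n => (v : ℕ) + 1 := by
      rw [Finset.image_image]; rfl
    rw [this, Finset.card_image_of_injective _ (fun u v huv => by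
      have : (u : ℕ) = v := by omega
      exact Fin.ext this), hl]
  have hQlen : Q'.length ≤ l := by
    have h5' : Q'.toFinset ⊆ w.toFinset := by simpa using h5
    have := Finset.card_le_card h5'
    rwa [List.toFinset_card_of_nodup h3, hcard] at this
  have hlen : P'.length + Q'.length = n := by
    have := h4.length_eq
    simpa using this
  have hPlen : n - l ≤ P'.length := by omega
  rw [hres, List.take_append_of_le_length hPlen]
  have hsorted : List.Pairwise (· < ·) P' :=
    List.Pairwise.sublist h2 (List.pairwise_lt_range' (s := 1) (n := n))
  exact hsorted.sublist (List.take_sublist _ _)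

/-- if `a ∈ {1,...,n}^r` has exactly `l` distinct entries, then the first
`n - l` entries of the one-line notation of `w_a` are increasing, i.e. `w_a ∈ D_{n,n-l}`. -/
theorem stmt7 (n r : ℕ) (a : Fin r → Fin n) (l : ℕ)
    (hl : (Finset.univ.image a).card = l) :
    List.Pairwise (· < ·) ((waList n (waWord a)).take (n - l)) := by
  exact stmt7_aux n r a l hl
end

section
/- The number of n-restricted q-set partitions of {1,...,r}, i.e., |P_{n×r}(q)|, equals d_{n,r}(q) = Σ_{l=1}^{n} S(r,l)·[n][n-1]···[n-l+1], where q is a prime power. -/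
open Finset

section Stmt9Aux

/-- sum of `k_j - k_j^*` along a list, with running parameter `m`. -/
def dsum : ℕ → List ℕ → ℕ
  | _, [] => 0
  | m, k :: ks => (k - min k m) + dsum (max m (min k m + 1)) ks

/-- The generating sum `T(m,r) = Σ_k q^(Σ (k_j - k_j^*))` defined recursively. -/
def Tsum (q n : ℕ) : ℕ → ℕ → ℕ
  | _, 0 => 1
  | m, r+1 => ∑ k ∈ Finset.range n, q ^ (k - min k m) * Tsum q n (max m (min k m + 1)) r

/-- Coefficients in the expansion of `Tsum` in falling `q`-factorials. -/
def cfun (n : ℕ) : ℕ → ℕ → ℕ → ℕ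
  | _, 0, 0 => 1
  | _, 0, _+1 => 0
  | m, r+1, 0 => min m n * cfun n m r 0
  | m, r+1, l+1 => min m n * cfun n m r (l+1) + cfun n (m+1) r l

/-- Shifted Stirling numbers. -/
def stirlingC (m r l : ℕ) : ℕ := ∑ j ∈ range (r+1), r.choose j * m^(r-j) * stirling j l

lemma dsum_eq_sum (l : List ℕ) :
    ∀ m, ∑ j ∈ range l.length, (l.getD j 0 - (starAux m l).getD j 0) = dsum m l := by
  induction l with
  | nil => intro m; simp [dsum]
  | cons a t ih =>
    intro m
    rw [List.length_cons, Finset.sum_range_succ']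
    simp only [starAux, List.getD_cons_succ, List.getD_cons_zero, dsum]
    rw [ih, Nat.add_comm]

lemma stirling_eq_zero : ∀ r l, r < l → stirling r l = 0 := by
  intro r
  induction r with
  | zero => intro l h; match l, h with | l+1, _ => rfl
  | succ r ih =>
    intro l h
    match l, h with
    | l+1, h =>
      have h1 : r < l + 1 := by omega
      have h2 : r < l := by omega
      simp [stirling, ih _ h1, ih _ h2]

lemma stirling_zero_right : ∀ r, 0 < r → stirling r 0 = 0 := by
  intro r h
  match r, h with | r+1, _ => rfl

lemma cfun_eq_zero (n : ℕ) : ∀ r m l, r < l → cfun n m r l = 0 := by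
  intro r
  induction r with
  | zero => intro m l h; match l, h with | l+1, _ => rfl
  | succ r ih =>
    intro m l h
    match l, h with
    | l+1, h => simp [cfun, ih m (l+1) (by omega), ih (m+1) l (by omega)]

lemma Tsum_succ (q n m r : ℕ) :
    Tsum q n m (r+1) = min m n * Tsum q n m r + qint q (n - m) * Tsum q n (m+1) r := by
  show (∑ k ∈ Finset.range n, q ^ (k - min k m) * Tsum q n (max m (min k m + 1)) r) = _
  have hsub : range (min m n) ⊆ range n := by
    apply Finset.range_subset_range.2; omega
  rw [← Finset.sum_sdiff hsub]
  have h1 : ∑ k ∈ range (min m n), q ^ (k - min k m) * Tsum q n (max m (min k m + 1)) r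
      = min m n * Tsum q n m r := by
    rw [Finset.sum_congr rfl (fun k hk => ?_), Finset.sum_const, Finset.card_range, smul_eq_mul]
    rw [Finset.mem_range] at hk
    have h2 : min k m = k := by omega
    have h3 : max m (k + 1) = m := by omega
    rw [h2, h3, Nat.sub_self, pow_zero, one_mul]
  have h2 : range n \ range (min m n) = Finset.Ico (min m n) n := by
    ext x
    simp only [Finset.mem_sdiff, Finset.mem_range, Finset.mem_Ico]
    omega
  rw [h1, h2]
  rcases Nat.lt_or_ge m n with hmn | hmn
  · have h3 : min m n = m := by omega
    rw [h3]
    have h4 : ∀ k ∈ Finset.Ico m n, q ^ (k - min k m) * Tsum q n (max m (min k m + 1)) r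
        = q ^ (k - m) * Tsum q n (m+1) r := by
      intro k hk
      rw [Finset.mem_Ico] at hk
      have h5 : min k m = m := by omega
      have h6 : max m (m + 1) = m + 1 := by omega
      rw [h5, h6]
    rw [Finset.sum_congr rfl h4, ← Finset.sum_mul]
    have h7 : ∑ k ∈ Finset.Ico m n, q ^ (k - m) = qint q (n - m) := by
      rw [Finset.sum_Ico_eq_sum_range, qint]
      exact Finset.sum_congr rfl fun k _ => by rw [Nat.add_sub_cancel_left]
    rw [h7, add_comm]
  · have h3 : min m n = n := by omega
    have h4 : n - m = 0 := by omega
    rw [h3, h4]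
    simp [qint]

lemma qint_prod_shift (q n m l : ℕ) :
    qint q (n - m) * ∏ j ∈ range l, qint q (n - (m+1) - j)
      = ∏ j ∈ range (l+1), qint q (n - m - j) := by
  rw [Finset.prod_range_succ']
  have h : ∀ j, n - m - (j + 1) = n - (m+1) - j := by intro j; omega
  simp only [h, Nat.sub_zero]
  ring

lemma Tsum_eq_cfun (q n : ℕ) : ∀ r m,
    Tsum q n m r = ∑ l ∈ range (r+1), cfun n m r l * ∏ j ∈ range l, qint q (n - m - j) := by
  intro r
  induction r with
  | zero => intro m; simp [Tsum, cfun]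
  | succ r ih =>
    intro m
    rw [Tsum_succ, ih m, ih (m+1),
      Finset.sum_range_succ' (fun l => cfun n m (r+1) l * ∏ j ∈ range l, qint q (n - m - j)) (r+1)]
    have e0 : cfun n m (r+1) 0 * ∏ j ∈ range 0, qint q (n - m - j) = min m n * cfun n m r 0 := by
      simp [cfun]
    rw [e0]
    have e1 : ∀ l, cfun n m (r+1) (l+1) * ∏ j ∈ range (l+1), qint q (n - m - j)
        = min m n * (cfun n m r (l+1) * ∏ j ∈ range (l+1), qint q (n - m - j))
          + qint q (n - m) * (cfun n (m+1) r l * ∏ j ∈ range l, qint q (n - (m+1) - j)) := by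
      intro l
      show (min m n * cfun n m r (l+1) + cfun n (m+1) r l) * _ = _
      rw [add_mul]
      congr 1
      · ring
      · rw [← qint_prod_shift q n m l]; ring
    rw [Finset.sum_congr rfl (fun l _ => e1 l), Finset.sum_add_distrib,
      ← Finset.mul_sum, ← Finset.mul_sum]
    have e2 : ∑ l ∈ range (r+1), cfun n m r l * ∏ j ∈ range l, qint q (n - m - j)
        = (∑ l ∈ range (r+1), cfun n m r (l+1) * ∏ j ∈ range (l+1), qint q (n - m - j))
          + cfun n m r 0 := by
      have t1 := Finset.sum_range_succ'
        (fun l => cfun n m r l * ∏ j ∈ range l, qint q (n - m - j)) (r+1)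
      have t2 := Finset.sum_range_succ
        (fun l => cfun n m r l * ∏ j ∈ range l, qint q (n - m - j)) (r+1)
      rw [cfun_eq_zero n r m (r+1) (by omega)] at t2
      simp only [Finset.range_zero, Finset.prod_empty, mul_one, zero_mul, add_zero] at t1 t2
      omega
    rw [e2]
    ring

lemma binom_shift (r x : ℕ) (g : ℕ → ℕ) :
    ∑ j ∈ range (r+2), (r+1).choose j * x^(r+1-j) * g j
      = (∑ j ∈ range (r+1), r.choose j * x^(r-j) * g (j+1))
        + x * ∑ j ∈ range (r+1), r.choose j * x^(r-j) * g j := by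
  rw [Finset.sum_range_succ' (fun j => (r+1).choose j * x^(r+1-j) * g j) (r+1)]
  simp only [Nat.choose_succ_succ, Nat.choose_zero_right, one_mul, Nat.sub_zero]
  have h1 : ∀ j ∈ range (r+1), (r.choose j + r.choose (j+1)) * x ^ (r + 1 - (j+1)) * g (j+1)
      = r.choose j * x^(r-j) * g (j+1) + r.choose (j+1) * x^(r-j) * g (j+1) := by
    intro j hj
    have : r + 1 - (j+1) = r - j := by omega
    rw [this, add_mul, add_mul]
  rw [Finset.sum_congr rfl h1, Finset.sum_add_distrib]
  have h2 : ∑ j ∈ range (r+1), r.choose (j+1) * x^(r-j) * g (j+1) + x^(r+1) * g 0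
      = x * ∑ j ∈ range (r+1), r.choose j * x^(r-j) * g j := by
    rw [Finset.mul_sum, Finset.sum_range_succ' (fun j => x * (r.choose j * x^(r-j) * g j)) r]
    congr 1
    · rw [Finset.sum_range_succ, Nat.choose_succ_self, zero_mul, zero_mul, add_zero]
      apply Finset.sum_congr rfl
      intro j hj
      rw [Finset.mem_range] at hj
      have : r - j = (r - (j+1)) + 1 := by omega
      rw [this, pow_succ]
      ring
    · rw [Nat.choose_zero_right, Nat.sub_zero, pow_succ]
      ring
  rw [add_assoc, h2]

lemma key_identity (m : ℕ) : ∀ r l,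
    ∑ j ∈ range (r+1), r.choose j * m^(r-j) * stirling (j+1) (l+1)
      = ∑ j ∈ range (r+1), r.choose j * (m+1)^(r-j) * stirling j l := by
  intro r
  induction r with
  | zero =>
    intro l
    simp [Finset.sum_range_one]
    cases l <;> rfl
  | succ r ih =>
    intro l
    rw [binom_shift r m (fun j => stirling (j+1) (l+1)),
        binom_shift r (m+1) (fun j => stirling j l)]
    have hA : ∀ j, stirling (j+2) (l+1) = (l+1) * stirling (j+1) (l+1) + stirling (j+1) l := by
      intro j; rfl
    have e1 : ∑ j ∈ range (r+1), r.choose j * m^(r-j) * stirling (j+1+1) (l+1)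
        = (l+1) * (∑ j ∈ range (r+1), r.choose j * m^(r-j) * stirling (j+1) (l+1))
          + ∑ j ∈ range (r+1), r.choose j * m^(r-j) * stirling (j+1) l := by
      rw [Finset.mul_sum, ← Finset.sum_add_distrib]
      apply Finset.sum_congr rfl
      intro j hj
      rw [hA j]
      ring
    rw [e1]
    cases l with
    | zero =>
      have z1 : ∀ j, stirling (j+1) 0 = 0 := fun j => rfl
      simp only [z1, mul_zero, Finset.sum_const_zero, add_zero]
      rw [ih 0]
      ring
    | succ l =>
      have e2 : ∑ j ∈ range (r+1), r.choose j * (m+1)^(r-j) * stirling (j+1) (l+1)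
          = (l+1) * (∑ j ∈ range (r+1), r.choose j * (m+1)^(r-j) * stirling j (l+1))
            + ∑ j ∈ range (r+1), r.choose j * (m+1)^(r-j) * stirling j l := by
        rw [Finset.mul_sum, ← Finset.sum_add_distrib]
        apply Finset.sum_congr rfl
        intro j hj
        show r.choose j * (m+1)^(r-j) * ((l+1) * stirling j (l+1) + stirling j l) = _
        ring
      rw [e2, ih (l+1), ih l]
      ring

lemma stirlingC_succ_zero (m r : ℕ) : stirlingC m (r+1) 0 = m * stirlingC m r 0 := by
  unfold stirlingC
  rw [binom_shift r m (fun j => stirling j 0)]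
  have z1 : ∀ j, stirling (j+1) 0 = 0 := fun j => rfl
  simp only [z1, mul_zero, Finset.sum_const_zero, zero_add]

lemma stirlingC_succ_succ (m r l : ℕ) :
    stirlingC m (r+1) (l+1) = m * stirlingC m r (l+1) + stirlingC (m+1) r l := by
  unfold stirlingC
  rw [binom_shift r m (fun j => stirling j (l+1)), key_identity m r l, add_comm]

lemma stirlingC_zero (r l : ℕ) : stirlingC 0 r l = stirling r l := by
  unfold stirlingC
  rw [Finset.sum_range_succ]
  have h1 : ∀ j ∈ range r, r.choose j * 0^(r-j) * stirling j l = 0 := by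
    intro j hj
    rw [Finset.mem_range] at hj
    rw [zero_pow (by omega : r - j ≠ 0)]
    ring
  rw [Finset.sum_congr rfl h1]
  simp

lemma cfun_eq_stirlingC (n : ℕ) : ∀ r m l, m + l ≤ n → cfun n m r l = stirlingC m r l := by
  intro r
  induction r with
  | zero =>
    intro m l _
    cases l with
    | zero => simp [cfun, stirlingC, stirling]
    | succ l => simp [cfun, stirlingC]; rfl
  | succ r ih =>
    intro m l h
    cases l with
    | zero =>
      show min m n * cfun n m r 0 = _
      rw [stirlingC_succ_zero, ih m 0 (by omega), Nat.min_eq_left (by omega)]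
    | succ l =>
      show min m n * cfun n m r (l+1) + cfun n (m+1) r l = _
      rw [stirlingC_succ_succ, ih m (l+1) (by omega), ih (m+1) l (by omega),
        Nat.min_eq_left (by omega)]

lemma sum_pow_dsum (q n : ℕ) : ∀ r m,
    ∑ k : Fin r → Fin n, q ^ dsum m (List.ofFn fun i => ((k i : ℕ))) = Tsum q n m r := by
  intro r
  induction r with
  | zero =>
    intro m
    simp [Tsum, dsum, List.ofFn_zero]
  | succ r ih =>
    intro m
    rw [show Tsum q n m (r+1)
      = ∑ k ∈ Finset.range n, q ^ (k - min k m) * Tsum q n (max m (min k m + 1)) r from rfl]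
    rw [← Equiv.sum_comp (Fin.consEquiv (fun _ : Fin (r+1) => Fin n))
      (fun k => q ^ dsum m (List.ofFn fun i => ((k i : ℕ))))]
    rw [Fintype.sum_prod_type]
    rw [← Fin.sum_univ_eq_sum_range
      (fun k => q ^ (k - min k m) * Tsum q n (max m (min k m + 1)) r) n]
    apply Finset.sum_congr rfl
    intro x _
    have hl : ∀ g : Fin r → Fin n,
        (List.ofFn fun i => (((Fin.consEquiv (fun _ : Fin (r+1) => Fin n)) (x, g)) i : ℕ))
          = (x : ℕ) :: List.ofFn fun i => ((g i : ℕ)) := by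
      intro g
      rw [List.ofFn_succ]
      simp [Fin.consEquiv]
    rw [Finset.sum_congr rfl (fun g _ => by rw [hl g])]
    simp only [dsum, pow_add]
    rw [← Finset.mul_sum, ih]

lemma sum_qSetDiff {n r : ℕ} (k : Fin r → Fin n) :
    ∑ j : Fin r, qSetDiff k j = dsum 0 (List.ofFn fun i => ((k i : ℕ))) := by
  have e : ∀ j : Fin r, qSetDiff k j
      = (List.ofFn fun i => ((k i : ℕ))).getD (j : ℕ) 0
        - (starAux 0 (List.ofFn fun i => ((k i : ℕ)))).getD (j : ℕ) 0 := by
    intro j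
    unfold qSetDiff starFn
    congr 1
    rw [List.getD_eq_getElem _ _ (by simp), List.getElem_ofFn]
  rw [Finset.sum_congr rfl (fun j _ => e j),
    Fin.sum_univ_eq_sum_range (fun j => (List.ofFn fun i => ((k i : ℕ))).getD j 0
      - (starAux 0 (List.ofFn fun i => ((k i : ℕ)))).getD j 0) r]
  have := dsum_eq_sum (List.ofFn fun i => ((k i : ℕ))) 0
  simpa using this

end Stmt9Aux

/-- the number of `n`-restricted `q`-set partitions of `{1,...,r}` equals
`d_{n,r}(q) = Σ_{l=1}^n S(r,l)[n][n-1]···[n-l+1]`, where `q = |F|` is a prime power. -/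
theorem stmt9 (F : Type*) [Field F] [Fintype F] (n r : ℕ) (hn : 0 < n) (hr : 0 < r) :
    Fintype.card (Σ k : Fin r → Fin n, ∀ j : Fin r, Fin (qSetDiff k j) → F) =
      ∑ l ∈ Finset.Icc 1 n,
        stirling r l * ∏ j ∈ Finset.range l, qint (Fintype.card F) (n - j) := by
  classical
  set q : ℕ := Fintype.card F with hq
  have step1 : Fintype.card (Σ k : Fin r → Fin n, ∀ j : Fin r, Fin (qSetDiff k j) → F)
      = ∑ k : Fin r → Fin n, q ^ (∑ j : Fin r, qSetDiff k j) := by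
    rw [Fintype.card_sigma]
    apply Finset.sum_congr rfl
    intro k _
    rw [Fintype.card_pi]
    have : ∀ j : Fin r, Fintype.card (Fin (qSetDiff k j) → F) = q ^ qSetDiff k j := by
      intro j
      rw [Fintype.card_fun, Fintype.card_fin]
    rw [Finset.prod_congr rfl (fun j _ => this j), Finset.prod_pow_eq_pow_sum]
  rw [step1, Finset.sum_congr rfl (fun k _ => by rw [sum_qSetDiff k]),
    sum_pow_dsum q n r 0, Tsum_eq_cfun q n r 0]
  have hsub : ∀ j : ℕ, n - 0 - j = n - j := fun j => by omega
  simp only [hsub]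
  have hterm : ∀ l ∈ range (r+1), cfun n 0 r l * ∏ j ∈ range l, qint q (n - j)
      = stirling r l * ∏ j ∈ range l, qint q (n - j) := by
    intro l _
    rcases le_or_gt l n with hl | hl
    · rw [cfun_eq_stirlingC n r 0 l (by omega), stirlingC_zero]
    · have hz : (∏ j ∈ range l, qint q (n - j)) = 0 := by
        apply Finset.prod_eq_zero (Finset.mem_range.2 hl)
        rw [Nat.sub_self]
        simp [qint]
      rw [hz, mul_zero, mul_zero]
  rw [Finset.sum_congr rfl hterm]
  have h1 : ∑ l ∈ range (r+1), stirling r l * ∏ j ∈ range l, qint q (n - j)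
      = ∑ l ∈ (range (r+1)) ∩ (Finset.Icc 1 n), stirling r l * ∏ j ∈ range l, qint q (n - j) := by
    symm
    apply Finset.sum_subset (Finset.inter_subset_left)
    intro l hl hnl
    rw [Finset.mem_range] at hl
    rw [Finset.mem_inter, Finset.mem_range, Finset.mem_Icc] at hnl
    rcases Nat.eq_zero_or_pos l with rfl | hlpos
    · rw [stirling_zero_right r hr, zero_mul]
    · have hln : n < l := by omega
      rw [Finset.prod_eq_zero (Finset.mem_range.2 hln) (by rw [Nat.sub_self]; simp [qint]),
        mul_zero]
  have h2 : ∑ l ∈ Finset.Icc 1 n, stirling r l * ∏ j ∈ range l, qint q (n - j)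
      = ∑ l ∈ (range (r+1)) ∩ (Finset.Icc 1 n), stirling r l * ∏ j ∈ range l, qint q (n - j) := by
    symm
    apply Finset.sum_subset (Finset.inter_subset_right)
    intro l hl hnl
    rw [Finset.mem_inter, Finset.mem_range] at hnl
    have : r < l := by
      by_contra hc
      exact hnl ⟨by omega, hl⟩
    rw [stirling_eq_zero r l this, zero_mul]
  rw [h1, ← h2]
end

section
/- The map k ↦ k* sending (k_1,...,k_r) ∈ Z_n^r to its *-height is a surjection onto P_{n×r}, the set of sequences (m_1,...,m_r) in Z_n^r with m_1 = 0 and such that whenever m_j = h > 0 there exists i < j with m_i = h - 1. -/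
open Finset

lemma starAux_length (m : ℕ) (l : List ℕ) : (starAux m l).length = l.length := by
  induction l generalizing m with
  | nil => rfl
  | cons k ks ih => simp [starAux, ih]

lemma starAux_le (m : ℕ) (l : List ℕ) (j : ℕ) :
    (starAux m l).getD j 0 ≤ l.getD j 0 := by
  induction l generalizing m j with
  | nil => simp [starAux]
  | cons k ks ih =>
    cases j with
    | zero => simpa [starAux] using min_le_left k m
    | succ j => simpa [starAux] using ih (max m (min k m + 1)) j

/-- `L` can only introduce value `h+1` if `h < M` or some earlier entry equals `h`. -/
def goodL (M : ℕ) (L : List ℕ) : Prop :=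
  ∀ j h, L.getD j 0 = h + 1 → h < M ∨ ∃ i < j, L.getD i 0 = h

lemma starAux_good (m : ℕ) (l : List ℕ) : goodL m (starAux m l) := by
  induction l generalizing m with
  | nil => intro j h hj; simp [starAux] at hj
  | cons k ks ih =>
    intro j h hj
    cases j with
    | zero =>
      simp [starAux] at hj
      have : min k m ≤ m := min_le_right _ _
      left; omega
    | succ j =>
      simp only [starAux, List.getD_cons_succ] at hj
      rcases ih (max m (min k m + 1)) j h hj with hlt | ⟨i, hi, hval⟩
      · rcases Nat.lt_or_ge h m with h1 | h1
        · left; exact h1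
        · have hle : h ≤ min k m := by omega
          rcases Nat.eq_or_lt_of_le hle with he | hl
          · right; exact ⟨0, Nat.succ_pos _, by simp [starAux, ← he]⟩
          · have : min k m ≤ m := min_le_right _ _
            left; omega
      · right
        exact ⟨i + 1, Nat.succ_lt_succ hi, by simpa [starAux] using hval⟩

lemma good_starAux_eq (M : ℕ) (L : List ℕ) (hg : goodL M L) : starAux M L = L := by
  induction L generalizing M with
  | nil => rfl
  | cons k ks ih =>
    have hk : k ≤ M := by
      cases k with
      | zero => omega
      | succ h =>
        rcases hg 0 h (by simp) with hlt | ⟨i, hi, _⟩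
        · omega
        · omega
    have hmin : min k M = k := min_eq_left hk
    rw [show starAux M (k :: ks) = min k M :: starAux (max M (min k M + 1)) ks from rfl,
      hmin]
    congr 1
    apply ih
    intro j h hj
    rcases hg (j + 1) h (by simpa using hj) with hlt | ⟨i, hi, hval⟩
    · left; omega
    · cases i with
      | zero =>
        simp at hval
        left; omega
      | succ i =>
        right; exact ⟨i, Nat.lt_of_succ_lt_succ hi, by simpa using hval⟩

lemma getD_ofFn {r : ℕ} (f : Fin r → ℕ) (j : Fin r) :
    (List.ofFn f).getD (j : ℕ) 0 = f j := by
  rw [List.getD_eq_getElem _ _ (by simp [j.isLt])]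
  simp

lemma starAux_head (l : List ℕ) : (starAux 0 l).getD 0 0 = 0 := by
  cases l with
  | nil => rfl
  | cons k ks => simp [starAux]

/-- the ⋆-height map `k ↦ k*` surjects `Z_n^r` onto `P_{n×r}`, the set of
sequences with values in `{0,...,n-1}` starting at `0` such that any value `h+1` is
preceded by the value `h`. -/
theorem stmt10 (n r : ℕ) (hn : 0 < n) :
    (fun k : Fin r → Fin n => starFn k) '' Set.univ =
      {m : Fin r → ℕ | (∀ j, m j < n) ∧ (∀ j : Fin r, (j : ℕ) = 0 → m j = 0) ∧
        ∀ (j : Fin r) (h : ℕ), m j = h + 1 → ∃ i, i < j ∧ m i = h} := by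
  ext m
  simp only [Set.image_univ, Set.mem_range, Set.mem_setOf_eq]
  constructor
  · rintro ⟨k, rfl⟩
    refine ⟨fun j => ?_, fun j hj => ?_, fun j h hj => ?_⟩
    · have h1 : starFn k j ≤ (List.ofFn fun i => ((k i : ℕ))).getD (j : ℕ) 0 :=
        starAux_le 0 _ _
      rw [getD_ofFn] at h1
      exact lt_of_le_of_lt h1 (k j).isLt
    · have := starAux_head (List.ofFn fun i => ((k i : ℕ)))
      unfold starFn
      rw [hj]
      exact this
    · rcases starAux_good 0 (List.ofFn fun i => ((k i : ℕ))) (j : ℕ) h hj with hlt | ⟨i, hi, hv⟩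
      · omega
      · refine ⟨⟨i, lt_trans hi j.isLt⟩, hi, hv⟩
  · rintro ⟨h1, h2, h3⟩
    refine ⟨fun j => ⟨m j, h1 j⟩, ?_⟩
    have hlist : (List.ofFn fun i => ((⟨m i, h1 i⟩ : Fin n) : ℕ)) = List.ofFn m := rfl
    have hgood : goodL 0 (List.ofFn m) := by
      intro j h hj
      by_cases hjr : j < r
      · rw [List.getD_eq_getElem _ _ (by simpa using hjr), List.getElem_ofFn] at hj
        obtain ⟨i, hij, hv⟩ := h3 ⟨j, hjr⟩ h hj
        right
        refine ⟨(i : ℕ), hij, ?_⟩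
        rw [List.getD_eq_getElem _ _ (by simpa using i.isLt), List.getElem_ofFn]
        simpa using hv
      · rw [List.getD_eq_default _ _ (by simpa using Nat.le_of_not_lt hjr)] at hj
        omega
    funext j
    unfold starFn
    rw [hlist, good_starAux_eq 0 _ hgood, getD_ofFn]
end
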